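/- arXiv:2304.04739 — 13 statements merged into one kernel-verified Lean document; each statement's English description precedes it below -/
import Mathlib

section
/- If s : ℕ → R is a function into a commutative ring R with s(0) = 0, s(n) a non-zero-divisor for all n > 0, and s(n-k) ∣ s(n) - s(k) for all n > k > 0, then for all n ≥ k ≥ 0 the s-binomial coefficient binom(n,k)_s = n!_s / (k!_s * (n-k)!_s) is an element of R (i.e., k!_s * (n-k)!_s divides n!_s in R), and for n > k > 0 the s-Pascal identity holds: binom(n,k)_s = binom(n-1,k-1)_s + ((s(n)-s(k))/s(n-k)) * binom(n-1,k)_s. -/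
open Finset

private def sB {R : Type*} [CommRing R] (q : ℕ → ℕ → R) : ℕ → ℕ → R
  | 0, _ => 1
  | n + 1, k => if k = 0 then 1 else sB q n (k - 1) + q (n + 1) k * sB q n k

private lemma sB_diag {R : Type*} [CommRing R] (q : ℕ → ℕ → R)
    (hq0 : ∀ n k, ¬(0 < k ∧ k < n) → q n k = 0) : ∀ n, sB q n n = 1 := by
  intro n
  induction n with
  | zero => rfl
  | succ n ih => simp [sB, hq0 (n + 1) (n + 1) (by omega), ih]

private lemma sB_spec {R : Type*} [CommRing R] (s : ℕ → R)
    (hreg : ∀ n : ℕ, 0 < n → s n ∈ nonZeroDivisors R)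
    (q : ℕ → ℕ → R)
    (hq : ∀ n k, 0 < k → k < n → s (n - k) * q n k = s n - s k)
    (hq0 : ∀ n k, ¬(0 < k ∧ k < n) → q n k = 0) :
    ∀ n k : ℕ, k ≤ n →
      (∏ i ∈ range k, s (i + 1)) * (∏ i ∈ range (n - k), s (i + 1)) * sB q n k
        = ∏ i ∈ range n, s (i + 1) := by
  intro n
  induction n with
  | zero =>
    intro k hk
    interval_cases k
    simp [sB]
  | succ n ih =>
    intro k hk
    match k with
    | 0 => simp [sB]
    | j + 1 =>
      by_cases hjn : j + 1 ≤ n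
      · obtain ⟨m, hm⟩ : ∃ m, n = j + 1 + m := ⟨n - (j + 1), by omega⟩
        subst hm
        have e1 : j + 1 + m + 1 - (j + 1) = m + 1 := by omega
        have e2 : j + 1 + m - j = m + 1 := by omega
        have e3 : j + 1 + m - (j + 1) = m := by omega
        have ih1 := ih j (by omega)
        have ih2 := ih (j + 1) hjn
        rw [e2] at ih1
        rw [e3] at ih2
        have key := hq (j + 1 + m + 1) (j + 1) (by omega) (by omega)
        rw [e1] at key
        rw [e1]
        have hsb : sB q (j + 1 + m + 1) (j + 1)
            = sB q (j + 1 + m) j + q (j + 1 + m + 1) (j + 1) * sB q (j + 1 + m) (j + 1) := by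
          simp [sB]
        rw [hsb]
        refine (mul_cancel_right_mem_nonZeroDivisors (hreg (m + 1) (Nat.succ_pos m))).mp ?_
        have pr1 : (∏ i ∈ range (j + 1), s (i + 1)) = (∏ i ∈ range j, s (i + 1)) * s (j + 1) :=
          prod_range_succ _ _
        have pr2 : (∏ i ∈ range (m + 1), s (i + 1)) = (∏ i ∈ range m, s (i + 1)) * s (m + 1) :=
          prod_range_succ _ _
        have pr3 : (∏ i ∈ range (j + 1 + m + 1), s (i + 1))
            = (∏ i ∈ range (j + 1 + m), s (i + 1)) * s (j + 1 + m + 1) := prod_range_succ _ _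
        rw [pr2] at ih1
        rw [pr1] at ih2
        rw [pr1, pr2, pr3]
        linear_combination (s (j + 1) * s (m + 1)) * ih1
          + (s (m + 1) * (s (j + 1 + m + 1) - s (j + 1))) * ih2
          + ((∏ i ∈ range j, s (i + 1)) * s (j + 1) * (∏ i ∈ range m, s (i + 1))
              * s (m + 1) * sB q (j + 1 + m) (j + 1)) * key
      · have hk' : j + 1 = n + 1 := by omega
        rw [hk']
        rw [sB_diag q hq0]
        simp

open Finset in
/-- s-binomial coefficients lie in `R` and satisfy the s-Pascal identity. -/
theorem s_pascal_identity {R : Type*} [CommRing R] (s : ℕ → R)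
    (h0 : s 0 = 0)
    (hreg : ∀ n : ℕ, 0 < n → s n ∈ nonZeroDivisors R)
    (hdvd : ∀ n k : ℕ, 0 < k → k < n → s (n - k) ∣ s n - s k) :
    ∃ B : ℕ → ℕ → R,
      (∀ n k : ℕ, k ≤ n →
        (∏ i ∈ range k, s (i + 1)) * (∏ i ∈ range (n - k), s (i + 1)) * B n k
          = ∏ i ∈ range n, s (i + 1)) ∧
      (∀ n k : ℕ, 0 < k → k < n →
        s (n - k) * B n k
          = s (n - k) * B (n - 1) (k - 1) + (s n - s k) * B (n - 1) k) := by
  classical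
  set q : ℕ → ℕ → R := fun n k =>
    if h : 0 < k ∧ k < n then (hdvd n k h.1 h.2).choose else 0 with hqdef
  have hq : ∀ n k, 0 < k → k < n → s (n - k) * q n k = s n - s k := by
    intro n k h1 h2
    have h : 0 < k ∧ k < n := ⟨h1, h2⟩
    simp only [hqdef, dif_pos h]
    exact ((hdvd n k h.1 h.2).choose_spec).symm
  have hq0 : ∀ n k, ¬(0 < k ∧ k < n) → q n k = 0 := by
    intro n k h
    simp only [hqdef, dif_neg h]
  refine ⟨sB q, sB_spec s hreg q hq hq0, ?_⟩
  intro n k hk hkn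
  obtain ⟨n', rfl⟩ : ∃ n', n = n' + 1 := ⟨n - 1, by omega⟩
  obtain ⟨k', rfl⟩ : ∃ k', k = k' + 1 := ⟨k - 1, by omega⟩
  have hsb : sB q (n' + 1) (k' + 1)
      = sB q n' k' + q (n' + 1) (k' + 1) * sB q n' (k' + 1) := by
    simp [sB]
  have key := hq (n' + 1) (k' + 1) hk hkn
  have e : n' + 1 - (k' + 1) = n' - k' := by omega
  rw [e] at key
  simp only [Nat.add_sub_cancel, e, hsb]
  linear_combination (sB q n' (k' + 1)) * key
end

section
/- Let s be a generalized n-series over a commutative ring R. For all a, b ∈ ℕ, if a ∣ b then s(a) ∣ s(b). -/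
/-- For a generalized n-series `s`, if `a ∣ b` then `s a ∣ s b`. -/
theorem GNS_dvd {R : Type*} [CommRing R] (s : ℕ → R)
    (h0 : s 0 = 0)
    (hreg : ∀ n : ℕ, 0 < n → s n ∈ nonZeroDivisors R)
    (hdvd : ∀ n k : ℕ, 0 < k → k < n → s (n - k) ∣ s n - s k)
    (a b : ℕ) (hab : a ∣ b) : s a ∣ s b := by
  obtain ⟨m, rfl⟩ := hab
  rcases Nat.eq_zero_or_pos a with rfl | ha
  · simp [h0]
  induction m with
  | zero => simp [h0]
  | succ n ih =>
    rcases Nat.eq_zero_or_pos n with rfl | hn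
    · simp
    · have h1 : a * n < a * (n + 1) := by nlinarith
      have h2 := hdvd (a * (n + 1)) (a * n) (Nat.mul_pos ha hn) h1
      have h3 : a * (n + 1) - a * n = a := by ring_nf; omega
      rw [h3] at h2
      have := dvd_add h2 ih
      simpa using this
end

section
/- Let s be a generalized n-series over a commutative ring R. For all a, b, n ∈ ℕ, if a ≡ b (mod n) then s(a) ≡ s(b) (mod s(n)), i.e., s(n) divides s(a) - s(b) in R. -/
/-- For a generalized n-series `s`, if `a ≡ b (mod n)` then `s a ≡ s b (mod s n)`. -/
theorem GNS_congruence {R : Type*} [CommRing R] (s : ℕ → R)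
    (h0 : s 0 = 0)
    (hreg : ∀ n : ℕ, 0 < n → s n ∈ nonZeroDivisors R)
    (hdvd : ∀ n k : ℕ, 0 < k → k < n → s (n - k) ∣ s n - s k)
    (a b n : ℕ) (hab : a % n = b % n) : s n ∣ s a - s b := by
  rcases Nat.eq_zero_or_pos n with hn | hn
  · subst hn
    simp only [Nat.mod_zero] at hab
    subst hab
    simp [h0]
  · have step : ∀ m, s n ∣ s (m + n) - s m := by
      intro m
      rcases Nat.eq_zero_or_pos m with hm | hm
      · subst hm; simpa [h0] using dvd_refl (s n)
      · have := hdvd (m + n) m hm (by omega)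
        simpa using this
    have key : ∀ q r, s n ∣ s (q * n + r) - s r := by
      intro q r
      induction q with
      | zero => simp
      | succ q ih =>
        have h : (q + 1) * n + r = (q * n + r) + n := by ring
        rw [h]
        have := dvd_add (step (q * n + r)) ih
        simpa using this
    have ha := key (a / n) (a % n)
    have hb := key (b / n) (b % n)
    rw [Nat.div_add_mod'] at ha hb
    rw [hab] at ha
    simpa using dvd_sub ha hb
end

section
/- Let s be a generalized n-series over a commutative ring R such that s(1) is a unit in R. If a, n ∈ ℕ and a is a unit modulo n (i.e., gcd(a,n) = 1), then s(a) is a unit in the quotient ring R/(s(n)). -/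
/-- For a generalized n-series `s` with `s 1` a unit, if `a` is a unit mod `n`
then `s a` is a unit in `R/(s n)`. -/
theorem GNS_unit_mod {R : Type*} [CommRing R] (s : ℕ → R)
    (h0 : s 0 = 0)
    (hreg : ∀ n : ℕ, 0 < n → s n ∈ nonZeroDivisors R)
    (hdvd : ∀ n k : ℕ, 0 < k → k < n → s (n - k) ∣ s n - s k)
    (h1 : IsUnit (s 1))
    (a n : ℕ) (ha : Nat.gcd a n = 1) :
    IsUnit (Ideal.Quotient.mk (Ideal.span {s n}) (s a)) := by
  -- L1 : s k ∣ s (m * k) for k > 0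
  have L1 : ∀ (m k : ℕ), 0 < k → s k ∣ s (m * k) := by
    intro m k hk
    induction m with
    | zero => simp [h0]
    | succ m ih =>
      have hstep : s k ∣ s ((m + 1) * k) - s (m * k) := by
        rcases Nat.eq_zero_or_pos m with hm | hm
        · subst hm; simp [h0]
        · have h := hdvd ((m + 1) * k) (m * k) (Nat.mul_pos hm hk)
            (by nlinarith)
          have : (m + 1) * k - m * k = k := by
            rw [Nat.add_mul, one_mul, Nat.add_sub_cancel_left]
          rwa [this] at h
      have := dvd_add hstep ih
      simpa using this
  -- L2 : s n ∣ s (v * n + r) - s r, for r > 0, n > 0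
  have L2 : ∀ (v r : ℕ), 0 < n → 0 < r → s n ∣ s (v * n + r) - s r := by
    intro v r hn hr
    induction v with
    | zero => simp
    | succ v ih =>
      have h := hdvd ((v + 1) * n + r) (v * n + r) (by positivity) (by nlinarith)
      have heq : (v + 1) * n + r - (v * n + r) = n := by
        rw [Nat.add_mul, one_mul]; omega
      rw [heq] at h
      have := dvd_add h ih
      simpa using this
  rcases Nat.eq_zero_or_pos n with hn | hn
  · -- n = 0, so a = 1
    subst hn
    simp only [Nat.gcd_zero_right] at ha
    subst ha
    exact h1.map _
  rcases eq_or_lt_of_le (show 1 ≤ n from hn) with hn1 | hn2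
  · -- n = 1 : quotient is trivial
    have htop : Ideal.span {s n} = ⊤ := by
      rw [Ideal.span_singleton_eq_top, ← hn1]; exact h1
    have : Subsingleton (R ⧸ Ideal.span {s n}) := by
      rw [htop]; infer_instance
    exact isUnit_of_subsingleton _
  -- n ≥ 2
  have hcop : Nat.Coprime a n := ha
  obtain ⟨u, -, hu⟩ := Nat.exists_mul_mod_eq_one_of_coprime hcop hn2
  rcases Nat.eq_zero_or_pos a with haz | hap
  · subst haz; simp [Nat.mod_eq_of_lt hn] at hu
  -- a * u = (a*u/n) * n + 1
  have hdecomp : a * u = (a * u / n) * n + 1 := by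
    conv_lhs => rw [← Nat.div_add_mod (a * u) n]
    rw [hu, Nat.mul_comm]
  have hd1 : s a ∣ s (a * u) := by
    have := L1 u a hap
    rwa [Nat.mul_comm] at this
  have hd2 : s n ∣ s (a * u) - s 1 := by
    have := L2 (a * u / n) 1 hn Nat.one_pos
    rwa [← hdecomp] at this
  obtain ⟨w, hw⟩ := hd2
  -- In the quotient, mk (s a) divides mk (s 1), a unit.
  set Q := Ideal.Quotient.mk (Ideal.span {s n})
  have hq : Q (s (a * u)) = Q (s 1) := by
    rw [← sub_eq_zero, ← map_sub, hw, map_mul]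
    have : Q (s n) = 0 := by
      simp [Q, Ideal.Quotient.eq_zero_iff_mem, Ideal.mem_span_singleton]
    rw [this, zero_mul]
  obtain ⟨t, ht⟩ := hd1
  have hdvdQ : Q (s a) ∣ Q (s 1) := ⟨Q t, by rw [← hq, ht, map_mul]⟩
  exact isUnit_of_dvd_unit hdvdQ (h1.map Q)
end

section
/- Let s be a generalized n-series over R, and suppose C_s(a,b) = (s(a+b) - s(a) - s(b))/(s(a)s(b)) is defined in R for all a, b > 0 (i.e., s(a)s(b) ∣ s(a+b) - s(a) - s(b)). Then for all integers m > 0 and n > k ≥ 0, c_s(mn, mk) := (s(mn) - s(mk))/s(mn - mk) satisfies c_s(mn, mk) ≡ 1 (mod s(m)). -/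
private lemma GNS_dvd_mul {R : Type*} [CommRing R] (s : ℕ → R)
    (h0 : s 0 = 0)
    (hdvd : ∀ n k : ℕ, 0 < k → k < n → s (n - k) ∣ s n - s k)
    (m : ℕ) (hm : 0 < m) : ∀ j : ℕ, s m ∣ s (m * j) := by
  intro j
  induction j with
  | zero => simp [h0]
  | succ j ih =>
    rcases Nat.eq_zero_or_pos j with rfl | hj
    · simp
    · have h1 : m * j < m * (j + 1) := by
        exact Nat.mul_lt_mul_left hm |>.mpr (Nat.lt_succ_self j)
      have h2 := hdvd (m * (j + 1)) (m * j) (Nat.mul_pos hm hj) h1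
      have h3 : m * (j + 1) - m * j = m := by
        rw [Nat.mul_succ]; omega
      rw [h3] at h2
      have : s (m * (j + 1)) = (s (m * (j + 1)) - s (m * j)) + s (m * j) := by ring
      rw [this]
      exact dvd_add h2 ih

/-- If `C_s(a,b) = (s(a+b) - s a - s b)/(s a · s b)` is defined in `R` for all
`a, b > 0`, then `c_s(mn, mk) = (s(mn) - s(mk))/s(mn - mk) ≡ 1 (mod s m)`. -/
theorem GNS_c_one_mod {R : Type*} [CommRing R] (s : ℕ → R)
    (h0 : s 0 = 0)
    (hreg : ∀ n : ℕ, 0 < n → s n ∈ nonZeroDivisors R)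
    (hdvd : ∀ n k : ℕ, 0 < k → k < n → s (n - k) ∣ s n - s k)
    (hC : ∀ a b : ℕ, 0 < a → 0 < b → s a * s b ∣ s (a + b) - s a - s b)
    (m n k : ℕ) (hm : 0 < m) (hk : k < n) :
    ∀ c : R, s (m * n - m * k) * c = s (m * n) - s (m * k) → s m ∣ c - 1 := by
  intro c hc
  rcases Nat.eq_zero_or_pos k with rfl | hkpos
  · simp [h0] at hc
    have hreg' := hreg (m * n) (Nat.mul_pos hm hk)
    have : s (m * n) * (c - 1) = 0 := by
      rw [mul_sub, hc, mul_one, sub_self]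
    have hc1 : c - 1 = 0 := hreg'.2 _ (by rw [mul_comm]; exact this)
    rw [hc1]
    exact dvd_zero _
  · set d := n - k with hd
    have hdn : d + k = n := by omega
    have hdpos : 0 < d := by omega
    have hmd : 0 < m * d := Nat.mul_pos hm hdpos
    have hmk : 0 < m * k := Nat.mul_pos hm hkpos
    have hsub : m * n - m * k = m * d := by rw [hd, Nat.mul_sub]
    obtain ⟨e, he⟩ := hC (m * d) (m * k) hmd hmk
    have hadd : m * d + m * k = m * n := by rw [← hdn]; ring
    rw [hadd] at he
    have key : s (m * d) * c = s (m * d) * (1 + s (m * k) * e) := by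
      rw [hsub] at hc
      rw [hc]
      have : s (m * n) - s (m * k) = s (m * d) + (s (m * n) - s (m * d) - s (m * k)) := by ring
      rw [this, he]; ring
    have hceq : c = 1 + s (m * k) * e := by
      have h := hreg (m * d) hmd
      have : s (m * d) * (c - (1 + s (m * k) * e)) = 0 := by rw [mul_sub, key, sub_self]
      have := h.2 _ (by rw [mul_comm]; exact this)
      exact sub_eq_zero.mp this
    have : c - 1 = s (m * k) * e := by rw [hceq]; ring
    rw [this]
    exact Dvd.dvd.mul_right (GNS_dvd_mul s h0 hdvd m hm k) e
end

section
/- Let s be a generalized n-series over R such that s(a)s(b) divides s(a+b) - s(a) - s(b) in R for all a, b > 0. Then for every m > 0 and 0 ≤ k ≤ n, the binomial coefficient of the rescaled series s_m(j) = s(mj) satisfies binom(n,k)_{s_m} ≡ binom(n,k) (mod s(m)), where binom(n,k) is the ordinary binomial coefficient. -/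
open Finset in
/-- Under the hypothesis `s a · s b ∣ s (a+b) - s a - s b`, the binomial coefficients
of the rescaled series `s_m(j) = s (m j)` are congruent to the ordinary binomial
coefficients mod `s m`. -/
theorem GNS_rescaled_binom_mod {R : Type*} [CommRing R] (s : ℕ → R)
    (h0 : s 0 = 0)
    (hreg : ∀ n : ℕ, 0 < n → s n ∈ nonZeroDivisors R)
    (hdvd : ∀ n k : ℕ, 0 < k → k < n → s (n - k) ∣ s n - s k)
    (hC : ∀ a b : ℕ, 0 < a → 0 < b → s a * s b ∣ s (a + b) - s a - s b)
    (m n k : ℕ) (hm : 0 < m) (hk : k ≤ n) :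
    ∀ B : R,
      (∏ i ∈ range k, s (m * (i + 1))) * (∏ i ∈ range (n - k), s (m * (i + 1))) * B
          = ∏ i ∈ range n, s (m * (i + 1)) →
      s m ∣ B - (n.choose k : R) := by
  set P : ℕ → R := fun j => ∏ i ∈ range j, s (m * (i + 1)) with hP
  have hP0 : P 0 = 1 := by simp [hP]
  have hPsucc : ∀ j, P (j + 1) = P j * s (m * (j + 1)) := by
    intro j; simp [hP, prod_range_succ]
  have hPreg : ∀ j, P j ∈ nonZeroDivisors R := by
    intro j
    induction j with
    | zero => rw [hP0]; exact one_mem _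
    | succ j ih =>
      rw [hPsucc]
      exact mul_mem ih (hreg _ (by positivity))
  have hsm : ∀ j, s m ∣ s (m * j) := by
    intro j
    induction j with
    | zero => simp [h0]
    | succ j ih =>
      rcases Nat.eq_zero_or_pos j with rfl | hj
      · simp
      · obtain ⟨c, hc⟩ := hC (m * j) m (by positivity) hm
        have key : s (m * (j + 1)) =
            (s (m * j + m) - s (m * j) - s m) + s (m * j) + s m := by
          rw [Nat.mul_succ]; ring
        rw [key, hc]
        exact dvd_add (dvd_add ⟨c * s (m * j), by ring⟩ ih) dvd_rfl
  -- existence of a good B, by induction (Pascal recurrence)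
  have hEx : ∀ N K : ℕ, K ≤ N →
      ∃ B : R, P K * P (N - K) * B = P N ∧ s m ∣ B - (N.choose K : R) := by
    intro N
    induction N with
    | zero =>
      intro K hK
      interval_cases K
      exact ⟨1, by simp [hP0], by simp⟩
    | succ N ih =>
      intro K hK
      rcases Nat.eq_zero_or_pos K with rfl | hK0
      · exact ⟨1, by simp [hP0], by simp⟩
      rcases eq_or_lt_of_le hK with rfl | hKlt
      · exact ⟨1, by simp [hP0], by simp⟩
      obtain ⟨K, rfl⟩ : ∃ K', K = K' + 1 := ⟨K - 1, by omega⟩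
      have hKN : K + 1 ≤ N := by omega
      obtain ⟨B1, e1, d1⟩ := ih K (by omega)
      obtain ⟨B2, e2, d2⟩ := ih (K + 1) hKN
      obtain ⟨c, hc⟩ := hC (m * (K + 1)) (m * (N - K))
        (Nat.mul_pos hm (by omega)) (Nat.mul_pos hm (by omega))
      set q : R := 1 + s (m * (K + 1)) * c with hqdef
      have hab : m * (K + 1) + m * (N - K) = m * (N + 1) := by
        rw [← Nat.mul_add]; congr 1; omega
      have hq : s (m * (N - K)) * q = s (m * (N + 1)) - s (m * (K + 1)) := by
        rw [hqdef]
        have := hc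
        rw [hab] at this
        linear_combination -this
      have hNK : N - K = (N - (K + 1)) + 1 := by omega
      have hPNK : P (N - K) = P (N - (K + 1)) * s (m * (N - K)) := by
        have harg : m * (N - (K + 1) + 1) = m * (N - K) := by congr 1; omega
        rw [hNK, hPsucc, harg]
      refine ⟨B1 + q * B2, ?_, ?_⟩
      · have hNK1 : N + 1 - (K + 1) = N - K := by omega
        rw [hNK1, hPsucc K, hPNK, hPsucc N]
        rw [hPNK] at e1
        rw [hPsucc K] at e2
        linear_combination s (m * (K + 1)) * e1 +
          (P K * s (m * (K + 1)) * P (N - (K + 1)) * B2) * hq +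
          (s (m * (N + 1)) - s (m * (K + 1))) * e2
      · have hq1 : s m ∣ q - 1 := by
          rw [hqdef]
          simpa using (hsm (K + 1)).mul_right c
        have hsplit : B1 + q * B2 - ((N + 1).choose (K + 1) : R) =
            (B1 - (N.choose K : R)) + (B2 - (N.choose (K + 1) : R)) + (q - 1) * B2 := by
          rw [Nat.choose_succ_succ]
          push_cast
          ring
        rw [hsplit]
        exact dvd_add (dvd_add d1 d2) (hq1.mul_right B2)
  -- uniqueness by cancellation
  intro B hB
  obtain ⟨B', hB', hd⟩ := hEx n k hk
  have hcan : B = B' := by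
    have hne : P k * P (n - k) ∈ nonZeroDivisors R := mul_mem (hPreg k) (hPreg (n - k))
    have hz : (B - B') * (P k * P (n - k)) = 0 := by linear_combination hB - hB'
    have := (mul_right_mem_nonZeroDivisors_eq_zero_iff hne).mp hz
    exact sub_eq_zero.mp this
  rw [hcan]
  exact hd
end

section
/- Let s be a generalized n-series over R with s(1) = 1 and s(a)s(b) ∣ s(a+b) - s(a) - s(b) for all a, b > 0. Then for any prime p and nonnegative integers n₁, n₀, k₁, k₀ with n₀, k₀ < p, one has binom(n₁p + n₀, k₁p + k₀)_s ≡ binom(n₁, k₁) · binom(n₀, k₀)_s (mod s(p)), where binom(n₁,k₁) is the ordinary binomial coefficient. -/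
open Finset in
/-- `b` is the s-binomial coefficient `binom(n,k)_s` (with the convention that it is
`0` when `k > n`): `k!_s (n-k)!_s · b = n!_s`. -/
def IsSBinom {R : Type*} [CommRing R] (s : ℕ → R) (n k : ℕ) (b : R) : Prop :=
  if k ≤ n then
    (∏ i ∈ range k, s (i + 1)) * (∏ i ∈ range (n - k), s (i + 1)) * b
      = ∏ i ∈ range n, s (i + 1)
  else b = 0

namespace SLucasAux

open Finset

set_option linter.unusedSectionVars false

lemma nat_dm {p q r a : ℕ} (hp : 0 < p) (h : a = p * q + r) (hr : r < p) :
    a / p = q ∧ a % p = r := by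
  subst h
  refine ⟨?_, ?_⟩
  · rw [Nat.mul_add_div hp, Nat.div_eq_of_lt hr, add_zero]
  · rw [Nat.mul_add_mod, Nat.mod_eq_of_lt hr]

section Main

variable {R : Type*} [CommRing R]

lemma sl_cancel {x a b : R} (hx : x ∈ nonZeroDivisors R) (h : x * a = x * b) : a = b := by
  have h2 : (a - b) * x = 0 := by linear_combination h
  exact sub_eq_zero.mp ((mem_nonZeroDivisors_iff.mp hx).2 _ h2)

variable (s : ℕ → R) (h0 : s 0 = 0)
  (hreg : ∀ n : ℕ, 0 < n → s n ∈ nonZeroDivisors R)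
  (hdvd : ∀ n k : ℕ, 0 < k → k < n → s (n - k) ∣ s n - s k)
  (h1 : s 1 = 1)
  (hC : ∀ a b : ℕ, 0 < a → 0 < b → s a * s b ∣ s (a + b) - s a - s b)

/-- The s-factorial. -/
def F (n : ℕ) : R := ∏ i ∈ range n, s (i + 1)

lemma F_zero : F s 0 = 1 := by simp [F]

lemma F_succ (n : ℕ) : F s (n + 1) = F s n * s (n + 1) := prod_range_succ _ _

lemma isSBinom_def (n k : ℕ) (b : R) :
    IsSBinom s n k b ↔ (if k ≤ n then F s k * F s (n - k) * b = F s n else b = 0) := Iff.rfl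

lemma isSBinom_zero (n : ℕ) : IsSBinom s n 0 (1 : R) := by
  simp [IsSBinom]

lemma isSBinom_self (n : ℕ) : IsSBinom s n n (1 : R) := by
  simp [IsSBinom]

lemma isSBinom_gt {n k : ℕ} (h : n < k) : IsSBinom s n k (0 : R) := by
  simp [IsSBinom, Nat.not_le.mpr h]

lemma isSBinom_succ_succ {n k : ℕ} (hk : k + 1 ≤ n) (c : R)
    (hc : s (n + 1) - s (k + 1) = s (n - k) * c) {B1 B2 : R}
    (hB1 : IsSBinom s n k B1) (hB2 : IsSBinom s n (k + 1) B2) :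
    IsSBinom s (n + 1) (k + 1) (B1 + c * B2) := by
  rw [isSBinom_def, if_pos (by omega : k ≤ n)] at hB1
  rw [isSBinom_def, if_pos hk] at hB2
  rw [isSBinom_def, if_pos (by omega : k + 1 ≤ n + 1)]
  have hm1 : n - k = (n - (k + 1)) + 1 := by omega
  have hm2 : n + 1 - (k + 1) = (n - (k + 1)) + 1 := by omega
  rw [hm2, F_succ s (n - (k+1)), F_succ s n, F_succ s k]
  rw [hm1, F_succ s (n - (k+1))] at hB1
  rw [F_succ s k] at hB2
  rw [hm1] at hc
  linear_combination (s (k+1)) * hB1 + (c * s ((n - (k+1)) + 1)) * hB2 - (F s n) * hc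

include h0 hreg hdvd h1 hC

lemma F_mem (n : ℕ) : F s n ∈ nonZeroDivisors R := by
  unfold F
  exact Submonoid.prod_mem _ fun i _ => hreg _ i.succ_pos

lemma sb_exists : ∀ n k : ℕ, ∃ B : R, IsSBinom s n k B := by
  intro n
  induction n with
  | zero =>
    intro k
    rcases Nat.eq_zero_or_pos k with rfl | hk
    · exact ⟨1, isSBinom_zero s 0⟩
    · exact ⟨0, isSBinom_gt s hk⟩
  | succ n ihn =>
    intro k
    match k with
    | 0 => exact ⟨1, isSBinom_zero s _⟩
    | (k+1) =>
      by_cases hkn : k + 1 ≤ n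
      · obtain ⟨B1, hB1⟩ := ihn k
        obtain ⟨B2, hB2⟩ := ihn (k+1)
        obtain ⟨c, hc⟩ := hdvd (n+1) (k+1) (Nat.succ_pos k) (by omega)
        rw [Nat.succ_sub_succ] at hc
        exact ⟨B1 + c * B2, isSBinom_succ_succ s hkn c hc hB1 hB2⟩
      · by_cases heq : k + 1 = n + 1
        · exact ⟨1, heq ▸ isSBinom_self s (n+1)⟩
        · exact ⟨0, isSBinom_gt s (by omega)⟩

noncomputable def SB (n k : ℕ) : R := (sb_exists s h0 hreg hdvd h1 hC n k).choose

local notation "𝔹" => SB s h0 hreg hdvd h1 hC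

lemma SB_spec (n k : ℕ) : IsSBinom s n k (𝔹 n k) :=
  (sb_exists s h0 hreg hdvd h1 hC n k).choose_spec

lemma sb_unique {n k : ℕ} {B B' : R} (hB : IsSBinom s n k B) (hB' : IsSBinom s n k B') :
    B = B' := by
  rw [isSBinom_def] at hB hB'
  by_cases h : k ≤ n
  · rw [if_pos h] at hB hB'
    have hx : F s k * F s (n - k) ∈ nonZeroDivisors R :=
      mul_mem (F_mem s h0 hreg hdvd h1 hC k) (F_mem s h0 hreg hdvd h1 hC (n-k))
    exact sl_cancel hx (hB.trans hB'.symm)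
  · rw [if_neg h] at hB hB'
    rw [hB, hB']

lemma SB_eq {n k : ℕ} (h : k ≤ n) : F s k * F s (n - k) * 𝔹 n k = F s n := by
  have := SB_spec s h0 hreg hdvd h1 hC n k
  rwa [isSBinom_def, if_pos h] at this

lemma SB_zero (n : ℕ) : 𝔹 n 0 = 1 :=
  sb_unique s h0 hreg hdvd h1 hC (SB_spec s h0 hreg hdvd h1 hC n 0) (isSBinom_zero s n)

lemma SB_self (n : ℕ) : 𝔹 n n = 1 :=
  sb_unique s h0 hreg hdvd h1 hC (SB_spec s h0 hreg hdvd h1 hC n n) (isSBinom_self s n)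

lemma SB_gt {n k : ℕ} (h : n < k) : 𝔹 n k = 0 :=
  sb_unique s h0 hreg hdvd h1 hC (SB_spec s h0 hreg hdvd h1 hC n k) (isSBinom_gt s h)

lemma SB_pascal {n k : ℕ} (hk : 0 < k) (hkn : k < n) {c : R}
    (hc : s n - s k = s (n - k) * c) :
    𝔹 n k = 𝔹 (n-1) (k-1) + c * 𝔹 (n-1) k := by
  obtain ⟨N, rfl⟩ : ∃ N, n = N + 1 := ⟨n - 1, by omega⟩
  obtain ⟨K, rfl⟩ : ∃ K, k = K + 1 := ⟨k - 1, by omega⟩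
  simp only [Nat.add_sub_cancel]
  have hc' : s (N+1) - s (K+1) = s (N - K) * c := by
    rwa [(by omega : N + 1 - (K + 1) = N - K)] at hc
  exact sb_unique s h0 hreg hdvd h1 hC (SB_spec s h0 hreg hdvd h1 hC (N+1) (K+1))
    (isSBinom_succ_succ s (by omega) c hc'
      (SB_spec s h0 hreg hdvd h1 hC N K) (SB_spec s h0 hreg hdvd h1 hC N (K+1)))

lemma SB_shift {m j : ℕ} (hj : 1 ≤ j) (hjm : j ≤ m) :
    s j * 𝔹 m j = s (m + 1 - j) * 𝔹 m (j - 1) := by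
  obtain ⟨J, rfl⟩ : ∃ J, j = J + 1 := ⟨j - 1, by omega⟩
  simp only [Nat.add_sub_cancel]
  have e1 := SB_eq s h0 hreg hdvd h1 hC (n := m) (k := J+1) hjm
  have e2 := SB_eq s h0 hreg hdvd h1 hC (n := m) (k := J) (by omega)
  apply sl_cancel (x := F s J * F s (m - (J+1)))
    (mul_mem (F_mem s h0 hreg hdvd h1 hC J) (F_mem s h0 hreg hdvd h1 hC (m - (J+1))))
  have hm : m - J = (m - (J+1)) + 1 := by omega
  have hm2 : m + 1 - (J + 1) = m - J := by omega
  rw [hm2, hm]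
  rw [hm, F_succ] at e2
  rw [F_succ] at e1
  linear_combination e1 - e2

lemma sl_dvd_mul (p : ℕ) (hp0 : 0 < p) : ∀ j, s p ∣ s (j * p) := by
  intro j
  induction j with
  | zero => rw [zero_mul, h0]; exact dvd_zero _
  | succ j ihj =>
    rcases Nat.eq_zero_or_pos j with rfl | hj
    · simp
    · have h' := hC (j * p) p (Nat.mul_pos hj hp0) hp0
      rw [(by ring : j * p + p = (j + 1) * p)] at h'
      have h'' : s p ∣ s ((j+1) * p) - s (j * p) - s p :=
        (dvd_mul_left (s p) (s (j * p))).trans h'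
      have e : s ((j+1)*p) = (s ((j+1)*p) - s (j*p) - s p) + s (j*p) + s p := by ring
      rw [e]
      exact dvd_add (dvd_add h'' ihj) dvd_rfl

lemma sl_smul (r : ℕ) : ∀ j, s r ∣ s (j * r) := by
  intro j
  induction j with
  | zero => rw [zero_mul, h0]; exact dvd_zero _
  | succ j ihj =>
    rcases Nat.eq_zero_or_pos j with rfl | hj
    · simp
    · rcases Nat.eq_zero_or_pos r with rfl | hr
      · rw [Nat.mul_zero]
      · have h' := hC (j * r) r (Nat.mul_pos hj hr) hr
        rw [(by ring : j * r + r = (j + 1) * r)] at h'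
        have h'' : s r ∣ s ((j+1) * r) - s (j * r) - s r :=
          (dvd_mul_left (s r) (s (j * r))).trans h'
        have e : s ((j+1)*r) = (s ((j+1)*r) - s (j*r) - s r) + s (j*r) + s r := by ring
        rw [e]
        exact dvd_add (dvd_add h'' ihj) dvd_rfl

lemma sl_mod (p : ℕ) (hp0 : 0 < p) (a : ℕ) : s p ∣ s a - s (a % p) := by
  rcases Nat.lt_or_ge a p with h | h
  · rw [Nat.mod_eq_of_lt h, sub_self]
    exact dvd_zero _
  · rcases Nat.eq_zero_or_pos (a % p) with h2 | h2
    · rw [h2, h0, sub_zero]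
      have := sl_dvd_mul s h0 hreg hdvd h1 hC p hp0 (a / p)
      rwa [Nat.div_mul_cancel (Nat.dvd_of_mod_eq_zero h2)] at this
    · have hqp : 0 < a / p := Nat.div_pos h hp0
      have h' := hC (a / p * p) (a % p) (Nat.mul_pos hqp hp0) h2
      rw [Nat.div_add_mod'] at h'
      have hml := sl_dvd_mul s h0 hreg hdvd h1 hC p hp0 (a / p)
      have h'' : s p ∣ s a - s (a / p * p) - s (a % p) := (hml.mul_right _).trans h'
      have e : s a - s (a % p) = (s a - s (a/p*p) - s (a%p)) + s (a/p*p) := by ring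
      rw [e]
      exact dvd_add h'' hml

lemma sl_unit (p : ℕ) (hp : p.Prime) {r : ℕ} (hr0 : 0 < r) (hrp : r < p) :
    ∃ x : R, s p ∣ s r * x - 1 := by
  rcases eq_or_ne r 1 with rfl | hne
  · exact ⟨1, by rw [h1, one_mul, sub_self]; exact dvd_zero _⟩
  · have hnd : ¬ p ∣ r := fun hd => absurd (Nat.le_of_dvd hr0 hd) (by omega)
    have hco : r.Coprime p := ((Nat.Prime.coprime_iff_not_dvd hp).mpr hnd).symm
    obtain ⟨j, -, hj⟩ := Nat.exists_mul_mod_eq_one_of_coprime hco hp.one_lt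
    obtain ⟨t, ht⟩ := sl_smul s h0 hreg hdvd h1 hC r j
    refine ⟨t, ?_⟩
    have hm := sl_mod s h0 hreg hdvd h1 hC p hp.pos (r * j)
    rw [hj, h1, mul_comm r j] at hm
    rwa [← ht]

lemma sl_cancel_mod (p : ℕ) (hp : p.Prime) {r : ℕ} (hr0 : 0 < r) (hrp : r < p) {y : R}
    (h : s p ∣ s r * y) : s p ∣ y := by
  obtain ⟨x, hx⟩ := sl_unit s h0 hreg hdvd h1 hC p hp hr0 hrp
  have e : y = (s r * y) * x - (s r * x - 1) * y := by ring
  rw [e]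
  exact dvd_sub (h.mul_right x) (hx.mul_right y)

lemma sl_c1 (p : ℕ) {n k : ℕ} {c : R} (hk : 0 < k) (hkn : k < n)
    (hc : s n - s k = s (n - k) * c) (hdk : s p ∣ s k) : s p ∣ c - 1 := by
  obtain ⟨v, hv⟩ := hC k (n - k) hk (by omega)
  rw [(by omega : k + (n - k) = n)] at hv
  have hx := hreg (n - k) (by omega)
  have e : s (n - k) * (c - 1) = s (n - k) * (s k * v) := by linear_combination hv - hc
  rw [sl_cancel hx e]
  exact hdk.mul_right v

theorem sl_main (p : ℕ) (hp : p.Prime) :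
    ∀ n k : ℕ, s p ∣ 𝔹 n k - ((n / p).choose (k / p) : R) * 𝔹 (n % p) (k % p) := by
  have hp0 : 0 < p := hp.pos
  intro n
  induction n using Nat.strong_induction_on with
  | _ n ih =>
    intro k
    rcases Nat.eq_zero_or_pos k with rfl | hkpos
    · rw [Nat.zero_div, Nat.zero_mod, SB_zero s h0 hreg hdvd h1 hC n,
        SB_zero s h0 hreg hdvd h1 hC (n % p), Nat.choose_zero_right, Nat.cast_one,
        one_mul, sub_self]
      exact dvd_zero _
    rcases lt_trichotomy k n with hkn | rfl | hnk
    · -- main case 0 < k < n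
      obtain ⟨c, hc⟩ := hdvd n k hkpos hkn
      have hpas := SB_pascal s h0 hreg hdvd h1 hC hkpos hkn hc
      have e1 := Nat.div_add_mod n p
      have e2 := Nat.div_add_mod k p
      have hnm : n % p < p := Nat.mod_lt n hp0
      have hkm : k % p < p := Nat.mod_lt k hp0
      have hdivle : k / p ≤ n / p := Nat.div_le_div_right (le_of_lt hkn)
      by_cases hn0 : n % p = 0
      · by_cases hk0 : k % p = 0
        · -- case D : p ∣ n, p ∣ k
          have hkdvd : p ∣ k := Nat.dvd_of_mod_eq_zero hk0
          have hndvd : p ∣ n := Nat.dvd_of_mod_eq_zero hn0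
          have hkq : 0 < k / p := Nat.div_pos (Nat.le_of_dvd hkpos hkdvd) hp0
          have hnq : 0 < n / p := Nat.div_pos (Nat.le_of_dvd (by omega) hndvd) hp0
          obtain ⟨q, hq⟩ : ∃ q, n / p = q + 1 := ⟨n/p - 1, by omega⟩
          obtain ⟨r, hr⟩ : ∃ r, k / p = r + 1 := ⟨k/p - 1, by omega⟩
          have dmn := nat_dm hp0 (show n - 1 = p * q + (p - 1) by
            rw [hq] at e1
            have hx : p * (q+1) = p * q + p := by ring
            omega) (by omega)
          have dmk := nat_dm hp0 (show k - 1 = p * r + (p - 1) by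
            rw [hr] at e2
            have hx : p * (r+1) = p * r + p := by ring
            omega) (by omega)
          have IH1 := ih (n-1) (by omega) (k-1)
          have IH2 := ih (n-1) (by omega) k
          rw [dmn.1, dmn.2, dmk.1, dmk.2, SB_self s h0 hreg hdvd h1 hC (p-1), mul_one] at IH1
          rw [dmn.1, dmn.2, hk0, hr, SB_zero s h0 hreg hdvd h1 hC (p-1), mul_one] at IH2
          have hc1 : s p ∣ c - 1 := by
            refine sl_c1 s h0 hreg hdvd h1 hC p hkpos hkn hc ?_
            have hk' : k = k / p * p := (Nat.div_mul_cancel hkdvd).symm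
            rw [hk']
            exact sl_dvd_mul s h0 hreg hdvd h1 hC p hp0 (k/p)
          rw [hq, hr, hn0, hk0, SB_zero s h0 hreg hdvd h1 hC 0, mul_one]
          obtain ⟨w1, hw1⟩ := IH1
          obtain ⟨w2, hw2⟩ := IH2
          obtain ⟨w3, hw3⟩ := hc1
          refine ⟨w1 + c * w2 + (q.choose (r+1) : R) * w3, ?_⟩
          have hcast : ((q+1).choose (r+1) : R) = (q.choose r : R) + (q.choose (r+1) : R) := by
            rw [Nat.choose_succ_succ]
            push_cast
            ring
          rw [hpas, hcast]
          linear_combination hw1 + c * hw2 + (q.choose (r+1) : R) * hw3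
        · -- case C : p ∣ n, p ∤ k
          have hndvd : p ∣ n := Nat.dvd_of_mod_eq_zero hn0
          have hnq : 0 < n / p := Nat.div_pos (Nat.le_of_dvd (by omega) hndvd) hp0
          have hdlt : k / p < n / p := by
            rcases eq_or_lt_of_le hdivle with heq | h
            · exfalso
              rw [heq] at e2
              omega
            · exact h
          obtain ⟨q, hq⟩ : ∃ q, n / p = q + 1 := ⟨n/p - 1, by omega⟩
          have dmn := nat_dm hp0 (show n - 1 = p * q + (p-1) by
            rw [hq] at e1
            have hx : p * (q+1) = p * q + p := by ring
            omega) (by omega)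
          have dmk := nat_dm hp0 (show k - 1 = p * (k/p) + (k%p - 1) by omega) (by omega)
          have dmnk := nat_dm hp0 (show n - k = p * (q - k/p) + (p - k%p) by
            have hx1 : p * (q - k/p) + p * (k/p) = p * q := by
              rw [← Nat.mul_add, (by omega : q - k/p + k/p = q)]
            rw [hq] at e1
            have hx2 : p * (q+1) = p * q + p := by ring
            omega) (by omega)
          have IH1 := ih (n-1) (by omega) (k-1)
          have IH2 := ih (n-1) (by omega) k
          rw [dmn.1, dmn.2, dmk.1, dmk.2] at IH1
          rw [dmn.1, dmn.2] at IH2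
          have hsh := SB_shift s h0 hreg hdvd h1 hC (m := p-1) (j := k%p) (by omega) (by omega)
          rw [(by omega : p - 1 + 1 - k % p = p - k % p)] at hsh
          have m1 := sl_mod s h0 hreg hdvd h1 hC p hp0 (n - k)
          rw [dmnk.2] at m1
          have m2 := sl_mod s h0 hreg hdvd h1 hC p hp0 n
          rw [hn0, h0, sub_zero] at m2
          have m3 := sl_mod s h0 hreg hdvd h1 hC p hp0 k
          obtain ⟨a1, ha1⟩ := m1
          obtain ⟨a2, ha2⟩ := m2
          obtain ⟨a3, ha3⟩ := m3
          have hw : s p ∣ s (k%p) + c * s (p - k%p) :=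
            ⟨a2 - a3 - c * a1, by linear_combination (-1 : R) * hc + ha2 - ha3 - c * ha1⟩
          have hY : s p ∣ 𝔹 (p-1) (k%p - 1) + c * 𝔹 (p-1) (k%p) := by
            refine sl_cancel_mod s h0 hreg hdvd h1 hC p hp
              (r := p - k%p) (by omega) (by omega) ?_
            obtain ⟨a, ha⟩ := hw
            exact ⟨a * 𝔹 (p-1) (k%p), by linear_combination (𝔹 (p-1) (k%p)) * ha - hsh⟩
          rw [hn0, SB_gt s h0 hreg hdvd h1 hC (show (0:ℕ) < k % p by omega), mul_zero,
            sub_zero]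
          obtain ⟨w1, hw1⟩ := IH1
          obtain ⟨w2, hw2⟩ := IH2
          obtain ⟨y, hy⟩ := hY
          refine ⟨w1 + c * w2 + (q.choose (k/p) : R) * y, ?_⟩
          rw [hpas]
          linear_combination hw1 + c * hw2 + (q.choose (k/p) : R) * hy
      · by_cases hk0 : k % p = 0
        · -- case B : p ∤ n, p ∣ k
          have hkdvd : p ∣ k := Nat.dvd_of_mod_eq_zero hk0
          have hkq : 0 < k / p := Nat.div_pos (Nat.le_of_dvd hkpos hkdvd) hp0
          obtain ⟨r, hr⟩ : ∃ r, k / p = r + 1 := ⟨k/p - 1, by omega⟩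
          have dmn := nat_dm hp0 (show n - 1 = p * (n/p) + (n%p - 1) by omega) (by omega)
          have dmk := nat_dm hp0 (show k - 1 = p * r + (p - 1) by
            rw [hr] at e2
            have hx : p * (r+1) = p * r + p := by ring
            omega) (by omega)
          have IH1 := ih (n-1) (by omega) (k-1)
          have IH2 := ih (n-1) (by omega) k
          rw [dmn.1, dmn.2, dmk.1, dmk.2,
            SB_gt s h0 hreg hdvd h1 hC (show n % p - 1 < p - 1 by omega), mul_zero,
            sub_zero] at IH1
          rw [dmn.1, dmn.2, hk0, SB_zero s h0 hreg hdvd h1 hC (n % p - 1), mul_one] at IH2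
          have hc1 : s p ∣ c - 1 := by
            refine sl_c1 s h0 hreg hdvd h1 hC p hkpos hkn hc ?_
            have hk' : k = k / p * p := (Nat.div_mul_cancel hkdvd).symm
            rw [hk']
            exact sl_dvd_mul s h0 hreg hdvd h1 hC p hp0 (k/p)
          rw [hk0, SB_zero s h0 hreg hdvd h1 hC (n % p), mul_one]
          obtain ⟨w1, hw1⟩ := IH1
          obtain ⟨w2, hw2⟩ := IH2
          obtain ⟨w3, hw3⟩ := hc1
          refine ⟨w1 + c * w2 + ((n/p).choose (k/p) : R) * w3, ?_⟩
          rw [hpas]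
          linear_combination hw1 + c * hw2 + ((n/p).choose (k/p) : R) * hw3
        · -- case A : p ∤ n, p ∤ k
          have dmn := nat_dm hp0 (show n - 1 = p * (n/p) + (n%p - 1) by omega) (by omega)
          have dmk := nat_dm hp0 (show k - 1 = p * (k/p) + (k%p - 1) by omega) (by omega)
          have IH1 := ih (n-1) (by omega) (k-1)
          have IH2 := ih (n-1) (by omega) k
          rw [dmn.1, dmn.2, dmk.1, dmk.2] at IH1
          rw [dmn.1, dmn.2] at IH2
          rcases lt_trichotomy (k % p) (n % p) with hlt | heq | hgt
          · -- A1
            obtain ⟨c₀, hc₀⟩ := hdvd (n%p) (k%p) (by omega) hlt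
            have dmnk := nat_dm hp0 (show n - k = p * (n/p - k/p) + (n%p - k%p) by
              have hx1 : p * (n/p - k/p) + p * (k/p) = p * (n/p) := by
                rw [← Nat.mul_add, (by omega : n/p - k/p + k/p = n/p)]
              omega) (by omega)
            have hdig := SB_pascal s h0 hreg hdvd h1 hC (show 0 < k % p by omega) hlt hc₀
            have m1 := sl_mod s h0 hreg hdvd h1 hC p hp0 (n - k)
            rw [dmnk.2] at m1
            have m2 := sl_mod s h0 hreg hdvd h1 hC p hp0 n
            have m3 := sl_mod s h0 hreg hdvd h1 hC p hp0 k
            obtain ⟨a1, ha1⟩ := m1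
            obtain ⟨a2, ha2⟩ := m2
            obtain ⟨a3, ha3⟩ := m3
            have hcc : s p ∣ c - c₀ := by
              refine sl_cancel_mod s h0 hreg hdvd h1 hC p hp
                (r := n%p - k%p) (by omega) (by omega) ?_
              exact ⟨a2 - a3 - c * a1,
                by linear_combination (-1 : R) * hc + hc₀ - c * ha1 + ha2 - ha3⟩
            obtain ⟨w1, hw1⟩ := IH1
            obtain ⟨w2, hw2⟩ := IH2
            obtain ⟨w3, hw3⟩ := hcc
            refine ⟨w1 + c * w2 + ((n/p).choose (k/p) : R) * (w3 * 𝔹 (n%p - 1) (k%p)), ?_⟩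
            rw [hpas, hdig]
            linear_combination hw1 + c * hw2
              + ((n/p).choose (k/p) : R) * (𝔹 (n%p - 1) (k%p)) * hw3
          · -- A2
            rw [heq, SB_self s h0 hreg hdvd h1 hC (n%p - 1), mul_one] at IH1
            rw [heq, SB_gt s h0 hreg hdvd h1 hC (show n%p - 1 < n%p by omega), mul_zero,
              sub_zero] at IH2
            rw [heq, SB_self s h0 hreg hdvd h1 hC (n%p), mul_one]
            obtain ⟨w1, hw1⟩ := IH1
            obtain ⟨w2, hw2⟩ := IH2
            refine ⟨w1 + c * w2, ?_⟩
            rw [hpas]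
            linear_combination hw1 + c * hw2
          · -- A3
            rw [SB_gt s h0 hreg hdvd h1 hC (show n%p - 1 < k%p - 1 by omega), mul_zero,
              sub_zero] at IH1
            rw [SB_gt s h0 hreg hdvd h1 hC (show n%p - 1 < k%p by omega), mul_zero,
              sub_zero] at IH2
            rw [SB_gt s h0 hreg hdvd h1 hC hgt, mul_zero, sub_zero]
            obtain ⟨w1, hw1⟩ := IH1
            obtain ⟨w2, hw2⟩ := IH2
            refine ⟨w1 + c * w2, ?_⟩
            rw [hpas]
            linear_combination hw1 + c * hw2
    · -- k = n
      rw [SB_self s h0 hreg hdvd h1 hC k, SB_self s h0 hreg hdvd h1 hC (k % p),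
        Nat.choose_self, Nat.cast_one, one_mul, sub_self]
      exact dvd_zero _
    · -- n < k
      have hdle : n / p ≤ k / p := Nat.div_le_div_right (le_of_lt hnk)
      rw [SB_gt s h0 hreg hdvd h1 hC hnk]
      rcases eq_or_lt_of_le hdle with heq | hlt
      · have e1 := Nat.div_add_mod n p
        have e2 := Nat.div_add_mod k p
        rw [← heq] at e2
        have hmlt : n % p < k % p := by omega
        rw [SB_gt s h0 hreg hdvd h1 hC hmlt, mul_zero, sub_zero]
        exact dvd_zero _
      · rw [Nat.choose_eq_zero_of_lt hlt, Nat.cast_zero, zero_mul, sub_zero]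
        exact dvd_zero _

end Main

end SLucasAux

/-- The s-Lucas theorem. -/
theorem s_lucas {R : Type*} [CommRing R] (s : ℕ → R)
    (h0 : s 0 = 0)
    (hreg : ∀ n : ℕ, 0 < n → s n ∈ nonZeroDivisors R)
    (hdvd : ∀ n k : ℕ, 0 < k → k < n → s (n - k) ∣ s n - s k)
    (h1 : s 1 = 1)
    (hC : ∀ a b : ℕ, 0 < a → 0 < b → s a * s b ∣ s (a + b) - s a - s b)
    (p : ℕ) (hp : p.Prime)
    (n₁ n₀ k₁ k₀ : ℕ) (hn₀ : n₀ < p) (hk₀ : k₀ < p) :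
    ∀ B b : R, IsSBinom s (n₁ * p + n₀) (k₁ * p + k₀) B → IsSBinom s n₀ k₀ b →
      s p ∣ B - (n₁.choose k₁ : R) * b := by
  intro B b hB hb
  have key := SLucasAux.sl_main s h0 hreg hdvd h1 hC p hp (n₁ * p + n₀) (k₁ * p + k₀)
  have dmn := SLucasAux.nat_dm hp.pos (show n₁ * p + n₀ = p * n₁ + n₀ by ring) hn₀
  have dmk := SLucasAux.nat_dm hp.pos (show k₁ * p + k₀ = p * k₁ + k₀ by ring) hk₀
  rw [dmn.1, dmn.2, dmk.1, dmk.2] at key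
  have hBe : B = SLucasAux.SB s h0 hreg hdvd h1 hC (n₁*p+n₀) (k₁*p+k₀) :=
    SLucasAux.sb_unique s h0 hreg hdvd h1 hC hB
      (SLucasAux.SB_spec s h0 hreg hdvd h1 hC (n₁*p+n₀) (k₁*p+k₀))
  have hbe : b = SLucasAux.SB s h0 hreg hdvd h1 hC n₀ k₀ :=
    SLucasAux.sb_unique s h0 hreg hdvd h1 hC hb
      (SLucasAux.SB_spec s h0 hreg hdvd h1 hC n₀ k₀)
  rw [hBe, hbe]
  exact key
end

section
/- Let s be a generalized n-series over ℤ with all values nonnegative. Then for all n > 0, Φ_n(s) := ∏_{d ∣ n} s(d)^{μ(n/d)} is an integer; in fact Φ_n(s) = s(n) / lcm{ s(n/p) : p prime factor of n }. -/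
open Finset


lemma gns_dvd {t : ℕ → ℕ} (t0 : t 0 = 0)
    (tdvd : ∀ n k : ℕ, 0 < k → k < n → (t (n - k) : ℤ) ∣ (t n : ℤ) - t k) :
    ∀ a b : ℕ, a ∣ b → t a ∣ t b := by
  intro a b hab
  obtain ⟨c, rfl⟩ := hab
  induction c with
  | zero => simp [t0]
  | succ c ih =>
    rcases Nat.eq_zero_or_pos a with rfl | ha
    · simpa using ih
    rcases Nat.eq_zero_or_pos c with rfl | hc
    · simp
    · have h := tdvd (a * (c + 1)) (a * c) (by positivity) (by nlinarith)
      have he : a * (c + 1) - a * c = a := by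
        have : a * (c+1) = a * c + a := by ring
        omega
      rw [he] at h
      have h2 : (t a : ℤ) ∣ (t (a * c) : ℤ) := Int.natCast_dvd_natCast.2 ih
      have : (t a : ℤ) ∣ (t (a * (c+1)) : ℤ) := by
        have := dvd_add h h2
        simpa using this
      exact_mod_cast this

lemma gns_gcd {t : ℕ → ℕ} (t0 : t 0 = 0)
    (tdvd : ∀ n k : ℕ, 0 < k → k < n → (t (n - k) : ℤ) ∣ (t n : ℤ) - t k) :
    ∀ a b : ℕ, Nat.gcd (t a) (t b) = t (Nat.gcd a b) := by
  have step : ∀ a b : ℕ, 0 < a → a < b →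
      Nat.gcd (t a) (t b) = Nat.gcd (t a) (t (b - a)) := by
    intro a b ha h
    apply Nat.dvd_antisymm
    · apply Nat.dvd_gcd (Nat.gcd_dvd_left _ _)
      have hd : (t a : ℤ) ∣ (t b : ℤ) - t (b - a) := by
        have := tdvd b (b - a) (by omega) (by omega)
        rwa [Nat.sub_sub_self h.le] at this
      have g1 : (Nat.gcd (t a) (t b) : ℤ) ∣ t a := Int.natCast_dvd_natCast.2 (Nat.gcd_dvd_left _ _)
      have g2 : (Nat.gcd (t a) (t b) : ℤ) ∣ t b := Int.natCast_dvd_natCast.2 (Nat.gcd_dvd_right _ _)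
      have : (Nat.gcd (t a) (t b) : ℤ) ∣ (t (b - a) : ℤ) := by
        have := dvd_sub g2 (g1.trans hd)
        simpa using this
      exact_mod_cast this
    · apply Nat.dvd_gcd (Nat.gcd_dvd_left _ _)
      have hd : (t (b - a) : ℤ) ∣ (t b : ℤ) - t a := tdvd b a ha h
      have e1 : (Nat.gcd (t a) (t (b - a)) : ℤ) ∣ t a :=
        Int.natCast_dvd_natCast.2 (Nat.gcd_dvd_left _ _)
      have e2 : (Nat.gcd (t a) (t (b - a)) : ℤ) ∣ t (b - a) :=
        Int.natCast_dvd_natCast.2 (Nat.gcd_dvd_right _ _)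
      have : (Nat.gcd (t a) (t (b - a)) : ℤ) ∣ (t b : ℤ) := by
        have := dvd_add (e2.trans hd) e1
        simpa using this
      exact_mod_cast this
  have key : ∀ N a b : ℕ, a + b ≤ N → Nat.gcd (t a) (t b) = t (Nat.gcd a b) := by
    intro N
    induction N with
    | zero =>
      intro a b h
      have : a = 0 ∧ b = 0 := by omega
      simp [this.1, this.2, t0]
    | succ N ih =>
      intro a b hab
      rcases Nat.eq_zero_or_pos a with rfl | ha
      · simp [t0]
      rcases Nat.eq_zero_or_pos b with rfl | hb
      · simp [t0]
      rcases lt_trichotomy a b with h | rfl | h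
      · rw [step a b ha h, ih a (b - a) (by omega), Nat.gcd_sub_self_right h.le]
      · simp [Nat.gcd_self]
      · rw [Nat.gcd_comm (t a), step b a hb h, ih b (a - b) (by omega),
          Nat.gcd_sub_self_right h.le, Nat.gcd_comm]
  intro a b
  exact key (a + b) a b le_rfl

lemma nat_gcd_lcm_distrib {a b c : ℕ} (ha : a ≠ 0) (hb : b ≠ 0) (hc : c ≠ 0) :
    Nat.gcd a (Nat.lcm b c) = Nat.lcm (Nat.gcd a b) (Nat.gcd a c) := by
  have hbc : Nat.lcm b c ≠ 0 := Nat.lcm_ne_zero hb hc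
  have hab : Nat.gcd a b ≠ 0 := fun h => ha (Nat.eq_zero_of_gcd_eq_zero_left h)
  have hac : Nat.gcd a c ≠ 0 := fun h => ha (Nat.eq_zero_of_gcd_eq_zero_left h)
  have hL : Nat.gcd a (Nat.lcm b c) ≠ 0 := fun h => ha (Nat.eq_zero_of_gcd_eq_zero_left h)
  have hR : Nat.lcm (Nat.gcd a b) (Nat.gcd a c) ≠ 0 := Nat.lcm_ne_zero hab hac
  apply Nat.dvd_antisymm
  · rw [← Nat.factorization_le_iff_dvd hL hR, Finsupp.le_def]
    intro p
    rw [Nat.factorization_gcd ha hbc, Nat.factorization_lcm hb hc,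
      Nat.factorization_lcm hab hac, Nat.factorization_gcd ha hb, Nat.factorization_gcd ha hc]
    simp only [Finsupp.inf_apply, Finsupp.sup_apply]
    rw [inf_sup_left]
  · rw [← Nat.factorization_le_iff_dvd hR hL, Finsupp.le_def]
    intro p
    rw [Nat.factorization_gcd ha hbc, Nat.factorization_lcm hb hc,
      Nat.factorization_lcm hab hac, Nat.factorization_gcd ha hb, Nat.factorization_gcd ha hc]
    simp only [Finsupp.inf_apply, Finsupp.sup_apply]
    rw [inf_sup_left]

lemma nat_gcd_finsetLcm_distrib (a : ℕ) (ha : a ≠ 0) (S : Finset ℕ) (f : ℕ → ℕ)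
    (hf : ∀ p ∈ S, f p ≠ 0) :
    Nat.gcd a (S.lcm f) = S.lcm fun p => Nat.gcd a (f p) := by
  induction S using Finset.induction_on with
  | empty => simp [Nat.gcd_one_right]
  | @insert q S' hq ih =>
    rw [Finset.lcm_insert, Finset.lcm_insert]
    have h1 : S'.lcm f ≠ 0 := by
      intro h
      rw [Finset.lcm_eq_zero_iff] at h
      obtain ⟨p, hp, hp0⟩ := h
      exact hf p (Finset.mem_insert_of_mem hp) hp0
    have : GCDMonoid.lcm (f q) (S'.lcm f) = Nat.lcm (f q) (S'.lcm f) := rfl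
    rw [this, nat_gcd_lcm_distrib ha (hf q (Finset.mem_insert_self _ _)) h1,
      ih (fun p hp => hf p (Finset.mem_insert_of_mem hp))]
    rfl

lemma gcd_div_primes {m p q : ℕ} (hm : 0 < m) (hp : p.Prime) (hq : q.Prime)
    (hpq : p ≠ q) (hpm : p ∣ m) (hqm : q ∣ m) :
    Nat.gcd (m / q) (m / p) = m / q / p := by
  have hcop : Nat.Coprime p q := (Nat.coprime_primes hp hq).2 hpq
  have hpmq : p ∣ m / q := by
    refine hcop.dvd_of_dvd_mul_right ?_
    rwa [Nat.div_mul_cancel hqm]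
  obtain ⟨k, hk⟩ := hpmq
  have hmq : m / q = p * k := hk
  have hmval : m = q * (p * k) := by rw [← hmq, Nat.mul_div_cancel' hqm]
  have h1 : m / q = p * k := hmq
  have h2 : m / p = q * k := by
    rw [hmval]
    rw [show q * (p * k) = q * k * p by ring]
    exact Nat.mul_div_cancel _ hp.pos
  have h3 : m / q / p = k := by
    rw [h1]
    exact Nat.mul_div_cancel_left _ hp.pos
  rw [h3, h1, h2, show p * k = k * p by ring, show q * k = k * q by ring,
    Nat.gcd_mul_left, hcop, mul_one]

lemma gns_key {t : ℕ → ℕ} (tpos : ∀ n : ℕ, 0 < n → t n ≠ 0)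
    (tdvd2 : ∀ a b : ℕ, a ∣ b → t a ∣ t b)
    (tgcd : ∀ a b : ℕ, Nat.gcd (t a) (t b) = t (Nat.gcd a b)) :
    ∀ (S : Finset ℕ) (m : ℕ), 0 < m → S ⊆ m.primeFactors →
      (∏ T ∈ S.powerset, ((t (m / T.prod id) : ℚ)) ^ ((-1:ℤ) ^ T.card)) =
        (t m : ℚ) / ((S.lcm fun p => t (m / p) : ℕ) : ℚ) := by
  intro S
  induction S using Finset.induction_on with
  | empty => intro m hm _; simp
  | @insert q S hq ih =>
    intro m hm hsub
    have hqP : q ∈ m.primeFactors := hsub (mem_insert_self _ _)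
    have hqprime : q.Prime := Nat.prime_of_mem_primeFactors hqP
    have hqdvd : q ∣ m := Nat.dvd_of_mem_primeFactors hqP
    have hmq : 0 < m / q := Nat.div_pos (Nat.le_of_dvd hm hqdvd) hqprime.pos
    have hSm : S ⊆ m.primeFactors := fun p hp => hsub (mem_insert_of_mem hp)
    have hSmq : S ⊆ (m / q).primeFactors := by
      intro p hp
      have hpP := hSm hp
      have hpprime := Nat.prime_of_mem_primeFactors hpP
      have hpdvd := Nat.dvd_of_mem_primeFactors hpP
      have hpq : p ≠ q := fun h => hq (h ▸ hp)
      have hcop : Nat.Coprime p q := (Nat.coprime_primes hpprime hqprime).2 hpq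
      refine Nat.mem_primeFactors.2 ⟨hpprime, ?_, hmq.ne'⟩
      refine hcop.dvd_of_dvd_mul_right ?_
      rwa [Nat.div_mul_cancel hqdvd]
    -- abbreviations
    set x := t (m / q) with hxdef
    have hx0 : x ≠ 0 := tpos _ hmq
    have hL0 : (S.lcm fun p => t (m / p)) ≠ 0 := by
      intro h
      rw [Finset.lcm_eq_zero_iff] at h
      obtain ⟨p, hp, hp0⟩ := h
      have hpP := hSm hp
      exact tpos _ (Nat.div_pos (Nat.le_of_dvd hm (Nat.dvd_of_mem_primeFactors hpP))
        (Nat.prime_of_mem_primeFactors hpP).pos) hp0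
    have hL'0 : (S.lcm fun p => t (m / q / p)) ≠ 0 := by
      intro h
      rw [Finset.lcm_eq_zero_iff] at h
      obtain ⟨p, hp, hp0⟩ := h
      have hpP := hSmq hp
      exact tpos _ (Nat.div_pos (Nat.le_of_dvd hmq (Nat.dvd_of_mem_primeFactors hpP))
        (Nat.prime_of_mem_primeFactors hpP).pos) hp0
    -- the product split
    rw [Finset.prod_powerset_insert hq]
    have hsecond : (∏ T ∈ S.powerset, ((t (m / (insert q T).prod id) : ℚ)) ^
        ((-1:ℤ) ^ (insert q T).card)) =
        (∏ T ∈ S.powerset, ((t (m / q / T.prod id) : ℚ)) ^ ((-1:ℤ) ^ T.card))⁻¹ := by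
      rw [← Finset.prod_inv_distrib]
      refine Finset.prod_congr rfl fun T hT => ?_
      have hqT : q ∉ T := fun h => hq (Finset.mem_powerset.1 hT h)
      rw [Finset.prod_insert hqT, Finset.card_insert_of_notMem hqT]
      have h1 : m / (id q * T.prod id) = m / q / T.prod id := by
        rw [Nat.div_div_eq_div_mul]
        rfl
      rw [h1, pow_succ, ← zpow_neg]
      ring_nf
    rw [hsecond, ih m hm hSm, ih (m / q) hmq hSmq]
    -- now the lcm computation
    have hgcd : Nat.gcd x (S.lcm fun p => t (m / p)) = S.lcm fun p => t (m / q / p) := by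
      rw [nat_gcd_finsetLcm_distrib x hx0 S _ (fun p hp => by
        have hpP := hSm hp
        exact tpos _ (Nat.div_pos (Nat.le_of_dvd hm (Nat.dvd_of_mem_primeFactors hpP))
          (Nat.prime_of_mem_primeFactors hpP).pos))]
      refine Finset.lcm_congr rfl fun p hp => ?_
      have hpP := hSm hp
      have hpprime := Nat.prime_of_mem_primeFactors hpP
      have hpdvd := Nat.dvd_of_mem_primeFactors hpP
      have hpq : p ≠ q := fun h => hq (h ▸ hp)
      rw [hxdef, tgcd, gcd_div_primes hm hpprime hqprime hpq hpdvd hqdvd]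
    have hlcmins : ((insert q S).lcm fun p => t (m / p)) =
        Nat.lcm x (S.lcm fun p => t (m / p)) := by
      rw [Finset.lcm_insert]; rfl
    rw [hlcmins]
    have hmul : x * (S.lcm fun p => t (m / p)) =
        (S.lcm fun p => t (m / q / p)) * Nat.lcm x (S.lcm fun p => t (m / p)) := by
      rw [← hgcd, Nat.gcd_mul_lcm]
    have hlcm0 : Nat.lcm x (S.lcm fun p => t (m / p)) ≠ 0 := Nat.lcm_ne_zero hx0 hL0
    have hmulQ : (x : ℚ) * ((S.lcm fun p => t (m / p) : ℕ) : ℚ) =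
        ((S.lcm fun p => t (m / q / p) : ℕ) : ℚ) * ((Nat.lcm x (S.lcm fun p => t (m / p)) : ℕ) : ℚ) := by
      exact_mod_cast congrArg (Nat.cast : ℕ → ℚ) hmul
    have hx0' : (x : ℚ) ≠ 0 := Nat.cast_ne_zero.2 hx0
    have hL0' : ((S.lcm fun p => t (m / p) : ℕ) : ℚ) ≠ 0 := Nat.cast_ne_zero.2 hL0
    have hL'0' : ((S.lcm fun p => t (m / q / p) : ℕ) : ℚ) ≠ 0 := Nat.cast_ne_zero.2 hL'0
    have hlcm0' : ((Nat.lcm x (S.lcm fun p => t (m / p)) : ℕ) : ℚ) ≠ 0 := Nat.cast_ne_zero.2 hlcm0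
    rw [← hxdef]
    field_simp
    linear_combination (-(t m : ℚ)) * hmulQ


lemma squarefree_prod_primes' {T : Finset ℕ} (hT : ∀ p ∈ T, p.Prime) :
    Squarefree (∏ p ∈ T, p) := by
  induction T using Finset.induction_on with
  | empty => simpa using squarefree_one
  | @insert q T hq ih =>
    rw [Finset.prod_insert hq]
    have hqp := hT q (mem_insert_self _ _)
    have hT' : ∀ p ∈ T, p.Prime := fun p hp => hT p (mem_insert_of_mem hp)
    have hcop : Nat.Coprime q (∏ p ∈ T, p) := by
      rw [Nat.Prime.coprime_iff_not_dvd hqp]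
      intro hdvd
      obtain ⟨p, hp, hqp'⟩ := hqp.prime.exists_mem_finset_dvd hdvd
      exact hq (((Nat.prime_dvd_prime_iff_eq hqp (hT' p hp)).1 hqp') ▸ hp)
    rw [Nat.squarefree_mul hcop]
    exact ⟨hqp.squarefree, ih hT'⟩

lemma moebius_prod_primes' {T : Finset ℕ} (hT : ∀ p ∈ T, p.Prime) :
    ArithmeticFunction.moebius (∏ p ∈ T, p) = (-1) ^ T.card := by
  have hsq := squarefree_prod_primes' hT
  rw [ArithmeticFunction.moebius_apply_of_squarefree hsq]
  congr 1
  rw [ArithmeticFunction.cardFactors_apply]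
  have hnodup : (∏ p ∈ T, p).primeFactorsList.Nodup :=
    (Nat.squarefree_iff_nodup_primeFactorsList hsq.ne_zero).1 hsq
  rw [← List.toFinset_card_of_nodup hnodup, Nat.toFinset_factors,
    Nat.primeFactors_prod hT]

lemma gns_reindex (t : ℕ → ℕ) (n : ℕ) (hn : 0 < n) :
    (∏ d ∈ n.divisors, (t d : ℚ) ^ (ArithmeticFunction.moebius (n / d) : ℤ)) =
      ∏ T ∈ n.primeFactors.powerset, ((t (n / T.prod id) : ℚ)) ^ ((-1:ℤ) ^ T.card) := by
  classical
  set f : ℕ → ℚ := fun e => (t (n / e) : ℚ) ^ (ArithmeticFunction.moebius e : ℤ) with hf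
  have step1 : (∏ d ∈ n.divisors, (t d : ℚ) ^ (ArithmeticFunction.moebius (n / d) : ℤ)) =
      ∏ d ∈ n.divisors, f (n / d) := by
    refine Finset.prod_congr rfl fun d hd => ?_
    rw [hf]
    simp only
    rw [Nat.div_div_self (Nat.dvd_of_mem_divisors hd) hn.ne']
  rw [step1, Nat.prod_div_divisors n f]
  have step2 : n.divisors.prod f = ∏ e ∈ n.divisors.filter Squarefree, f e := by
    refine (Finset.prod_filter_of_ne fun e he hne => ?_).symm
    by_contra hsq
    apply hne
    rw [ArithmeticFunction.moebius_eq_zero_of_not_squarefree hsq]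
    simp
  rw [step2]
  have step3 : (∏ e ∈ n.divisors.filter Squarefree, f e) =
      ∏ T ∈ (UniqueFactorizationMonoid.normalizedFactors n).toFinset.powerset, f T.val.prod := by
    rw [Finset.prod_eq_multiset_prod, Nat.divisors_filter_squarefree hn.ne',
      Multiset.map_map, Finset.prod_eq_multiset_prod]
    rfl
  rw [step3]
  have hpf : (UniqueFactorizationMonoid.normalizedFactors n).toFinset = n.primeFactors := by
    rw [Nat.factors_eq]; rfl
  rw [hpf]
  refine Finset.prod_congr rfl fun T hT => ?_
  have hT' : ∀ p ∈ T, p.Prime := fun p hp =>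
    Nat.prime_of_mem_primeFactors (Finset.mem_powerset.1 hT hp)
  have hprod : T.val.prod = ∏ p ∈ T, p := by
    rw [Finset.prod]
    simp
  have hid : T.prod id = ∏ p ∈ T, p := rfl
  simp only [hf]
  rw [hprod, hid, moebius_prod_primes' hT']

lemma intlcm_eq (S : Finset ℕ) (f : ℕ → ℤ) (hf : ∀ p, 0 ≤ f p) :
    S.lcm f = ((S.lcm fun p => (f p).toNat : ℕ) : ℤ) := by
  classical
  induction S using Finset.induction_on with
  | empty => simp
  | @insert q S hq ih =>
    rw [Finset.lcm_insert, Finset.lcm_insert, ih]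
    have this1 : GCDMonoid.lcm ((f q).toNat) (S.lcm fun p => (f p).toNat) =
        Nat.lcm ((f q).toNat) (S.lcm fun p => (f p).toNat) := rfl
    rw [this1]
    conv_lhs => rw [← Int.toNat_of_nonneg (hf q)]
    rw [← Int.coe_lcm, Int.lcm_natCast_natCast]

open Finset in
/-- For a nonnegative generalized n-series over `ℤ`,
`Φ_n(s) = ∏_{d ∣ n} s(d)^{μ(n/d)}` is an integer, equal to
`s n / lcm { s (n/p) : p prime factor of n }`. -/
theorem GNS_cyclotomic_integer (s : ℕ → ℤ)
    (h0 : s 0 = 0)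
    (hne : ∀ n : ℕ, 0 < n → s n ≠ 0)
    (hdvd : ∀ n k : ℕ, 0 < k → k < n → s (n - k) ∣ s n - s k)
    (hpos : ∀ n : ℕ, 0 ≤ s n)
    (n : ℕ) (hn : 0 < n) :
    ∃ m : ℤ,
      (∏ d ∈ n.divisors, (s d : ℚ) ^ (ArithmeticFunction.moebius (n / d))) = (m : ℚ) ∧
      (m : ℚ) = (s n : ℚ) / ((n.primeFactors.lcm fun p => s (n / p) : ℤ) : ℚ) := by
  classical
  set t : ℕ → ℕ := fun k => (s k).toNat with htdef
  have ht : ∀ k, ((t k : ℤ)) = s k := fun k => Int.toNat_of_nonneg (hpos k)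
  have t0 : t 0 = 0 := by simp [htdef, h0]
  have tpos : ∀ k : ℕ, 0 < k → t k ≠ 0 := by
    intro k hk h
    apply hne k hk
    rw [← ht k, h]
    rfl
  have tdvd : ∀ a b : ℕ, 0 < b → b < a → (t (a - b) : ℤ) ∣ (t a : ℤ) - t b := by
    intro a b hb hba
    rw [ht, ht, ht]
    exact hdvd a b hb hba
  have tdvd2 : ∀ a b : ℕ, a ∣ b → t a ∣ t b := gns_dvd t0 tdvd
  have tgcd : ∀ a b : ℕ, Nat.gcd (t a) (t b) = t (Nat.gcd a b) := gns_gcd t0 tdvd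
  set L : ℕ := n.primeFactors.lcm fun p => t (n / p) with hLdef
  have hL0 : L ≠ 0 := by
    intro h
    rw [hLdef, Finset.lcm_eq_zero_iff] at h
    obtain ⟨p, hp, hp0⟩ := h
    exact tpos _ (Nat.div_pos (Nat.le_of_dvd hn (Nat.dvd_of_mem_primeFactors hp))
      (Nat.prime_of_mem_primeFactors hp).pos) hp0
  have hLdvd : L ∣ t n := by
    refine Finset.lcm_dvd fun p hp => ?_
    exact tdvd2 _ _ (Nat.div_dvd_of_dvd (Nat.dvd_of_mem_primeFactors hp))
  refine ⟨((t n / L : ℕ) : ℤ), ?_, ?_⟩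
  · have hcast : ∀ d, (s d : ℚ) = ((t d : ℕ) : ℚ) := by
      intro d
      rw [← ht d]
      push_cast
      ring
    calc (∏ d ∈ n.divisors, (s d : ℚ) ^ (ArithmeticFunction.moebius (n / d)))
        = ∏ d ∈ n.divisors, (t d : ℚ) ^ (ArithmeticFunction.moebius (n / d) : ℤ) := by
          refine Finset.prod_congr rfl fun d _ => ?_
          rw [hcast]
      _ = ∏ T ∈ n.primeFactors.powerset, ((t (n / T.prod id) : ℚ)) ^ ((-1:ℤ) ^ T.card) :=
          gns_reindex t n hn
      _ = (t n : ℚ) / ((L : ℕ) : ℚ) := gns_key tpos tdvd2 tgcd n.primeFactors n hn le_rfl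
      _ = (((t n / L : ℕ) : ℤ) : ℚ) := by
          rw [Int.cast_natCast, Nat.cast_div hLdvd (Nat.cast_ne_zero.2 hL0)]
  · have hlcmZ : (n.primeFactors.lcm fun p => s (n / p)) = ((L : ℕ) : ℤ) := by
      rw [hLdef]
      have := intlcm_eq n.primeFactors (fun p => s (n / p)) (fun p => hpos _)
      rw [this]
    rw [hlcmZ, ← ht n, Int.cast_natCast, Int.cast_natCast, Int.cast_natCast,
      Nat.cast_div hLdvd (Nat.cast_ne_zero.2 hL0)]
end

section
/- Let s be a nonnegative generalized n-series over ℤ, m > 0, and a, b ≥ 0 with a ≡ b (mod m) and a, b not ≡ 0 (mod m). Set d = gcd(a,m) = gcd(b,m). Then s(a)/s(d) ≡ s(b)/s(d) (mod Φ_m(s)), and both sides are units modulo Φ_m(s). -/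
open Finset ArithmeticFunction

section GNS
variable {s : ℕ → ℤ} (h0 : s 0 = 0) (hne : ∀ n : ℕ, 0 < n → 0 < s n)
  (hdvd : ∀ n k : ℕ, 0 < k → k < n → s (n - k) ∣ s n - s k)

include h0 hne in
lemma gns_nonneg (x : ℕ) : 0 ≤ s x := by
  rcases Nat.eq_zero_or_pos x with h | h
  · simp [h, h0]
  · exact (hne x h).le

include h0 hdvd in
lemma gns_mod {k : ℕ} (hk : 0 < k) : ∀ n, s k ∣ s n - s (n % k) := by
  intro n
  induction n using Nat.strong_induction_on with
  | _ n ih =>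
    rcases lt_trichotomy n k with h | h | h
    · rw [Nat.mod_eq_of_lt h]; simp
    · subst h; simp [Nat.mod_self, h0]
    · have h1 : s k ∣ s n - s (n - k) := by
        have := hdvd n (n - k) (by omega) (by omega)
        simpa [Nat.sub_sub_self h.le] using this
      have h2 : s k ∣ s (n - k) - s ((n - k) % k) := ih (n - k) (by omega)
      have h3 : (n - k) % k = n % k := by
        conv_rhs => rw [show n = (n - k) + k by omega]
        simp [Nat.add_mod_right]
      rw [h3] at h2
      have := dvd_add h1 h2
      simpa using this

include h0 hdvd in
lemma gns_dvd_s12 {d n : ℕ} (h : d ∣ n) : s d ∣ s n := by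
  rcases Nat.eq_zero_or_pos d with hd | hd
  · subst hd
    obtain rfl : n = 0 := Nat.eq_zero_of_zero_dvd h
    simp [h0]
  · have := gns_mod h0 hdvd hd n
    rw [Nat.mod_eq_zero_of_dvd h, h0] at this
    simpa using this

include h0 hdvd in
lemma gns_gcd_dvd (c : ℤ) : ∀ k n : ℕ, c ∣ s k → c ∣ s n → c ∣ s (Nat.gcd k n) := by
  intro k
  induction k using Nat.strong_induction_on with
  | _ k ih =>
    intro n hk hn
    rcases Nat.eq_zero_or_pos k with h | h
    · subst h; simpa using hn
    · rw [Nat.gcd_rec]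
      have h1 : c ∣ s (n % k) := by
        have := gns_mod h0 hdvd h n
        have h2 : c ∣ s n - s (n % k) := hk.trans this
        have := dvd_sub hn h2
        simpa using this
      exact ih (n % k) (Nat.mod_lt _ h) k h1 hk

variable (s) in
/-- natural-number version of `s` -/
def gnsT (x : ℕ) : ℕ := (s x).toNat

variable (s) in
/-- `p`-adic valuation of `s` -/
def gnsF (p e : ℕ) : ℕ := (gnsT s e).factorization p

include h0 hne in
lemma gnsT_cast (x : ℕ) : (gnsT s x : ℤ) = s x :=
  Int.toNat_of_nonneg (gns_nonneg h0 hne x)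

include h0 hne in
lemma gnsT_ne_zero {x : ℕ} (hx : 0 < x) : gnsT s x ≠ 0 := by
  have := hne x hx
  have := gnsT_cast h0 hne (s := s) x
  omega

include h0 hne hdvd in
lemma gnsT_dvd {d n : ℕ} (h : d ∣ n) : gnsT s d ∣ gnsT s n := by
  have := gns_dvd_s12 h0 hdvd h
  rw [← gnsT_cast h0 hne d, ← gnsT_cast h0 hne n] at this
  exact_mod_cast this

include h0 hne hdvd in
lemma gnsT_gcd (k n : ℕ) : gnsT s (Nat.gcd k n) = Nat.gcd (gnsT s k) (gnsT s n) := by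
  apply Nat.dvd_antisymm
  · exact Nat.dvd_gcd (gnsT_dvd h0 hne hdvd (Nat.gcd_dvd_left k n))
      (gnsT_dvd h0 hne hdvd (Nat.gcd_dvd_right k n))
  · have h1 : ((Nat.gcd (gnsT s k) (gnsT s n) : ℤ)) ∣ s k := by
      rw [← gnsT_cast h0 hne k]; exact_mod_cast Nat.gcd_dvd_left _ _
    have h2 : ((Nat.gcd (gnsT s k) (gnsT s n) : ℤ)) ∣ s n := by
      rw [← gnsT_cast h0 hne n]; exact_mod_cast Nat.gcd_dvd_right _ _
    have := gns_gcd_dvd h0 hdvd _ k n h1 h2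
    rw [← gnsT_cast h0 hne (Nat.gcd k n)] at this
    exact_mod_cast this

include h0 hne hdvd in
lemma gns_f_min (p : ℕ) {x y : ℕ} (hx : 0 < x) (hy : 0 < y) :
    (gnsT s (Nat.gcd x y)).factorization p
      = min ((gnsT s x).factorization p) ((gnsT s y).factorization p) := by
  rw [gnsT_gcd h0 hne hdvd, Nat.factorization_gcd (gnsT_ne_zero h0 hne hx) (gnsT_ne_zero h0 hne hy)]
  exact Finsupp.inf_apply _ _ _

include h0 hne hdvd in
lemma gns_f_mono (p : ℕ) {x y : ℕ} (hx : 0 < x) (h : x ∣ y) (hy : 0 < y) :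
    (gnsT s x).factorization p ≤ (gnsT s y).factorization p := by
  have := gns_f_min h0 hne hdvd p hx hy
  rw [Nat.gcd_eq_left h] at this
  omega

lemma gns_lcm_fact (T : Finset ℕ) (g : ℕ → ℕ) (hg : ∀ x ∈ T, g x ≠ 0) (p : ℕ) :
    (T.lcm g).factorization p = T.sup (fun x => (g x).factorization p) := by
  classical
  induction T using Finset.induction_on with
  | empty => simp
  | insert a T ha ih =>
    rw [Finset.lcm_insert, Finset.sup_insert]
    have h1 : T.lcm g ≠ 0 := by
      intro h
      obtain ⟨x, hx, h'⟩ := Finset.lcm_eq_zero_iff.mp h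
      exact hg x (Finset.mem_insert_of_mem hx) h'
    have h2 : g a ≠ 0 := hg a (Finset.mem_insert_self a T)
    have : (lcm (g a) (T.lcm g)).factorization p = (Nat.lcm (g a) (T.lcm g)).factorization p := rfl
    rw [this, Nat.factorization_lcm h2 h1, Finsupp.sup_apply,
      ih (fun x hx => hg x (Finset.mem_insert_of_mem hx))]

include h0 hne hdvd in
lemma gnsF_min (p : ℕ) {x y : ℕ} (hx : 0 < x) (hy : 0 < y) :
    gnsF s p (Nat.gcd x y) = min (gnsF s p x) (gnsF s p y) :=
  gns_f_min h0 hne hdvd p hx hy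

include h0 hne hdvd in
lemma gnsF_mono (p : ℕ) {x y : ℕ} (hx : 0 < x) (h : x ∣ y) (hy : 0 < y) :
    gnsF s p x ≤ gnsF s p y :=
  gns_f_mono h0 hne hdvd p hx h hy

include h0 hne hdvd in
lemma gns_inner (m p c : ℕ) (hm2 : 2 ≤ m) (hc1 : 1 ≤ c)
    (hcm : c ≤ gnsF s p m) :
    ∑ e ∈ m.divisors, (moebius (m / e) : ℤ) * (if c ≤ gnsF s p e then 1 else 0)
      = if m.properDivisors.sup (gnsF s p) < c then 1 else 0 := by
  classical
  set f : ℕ → ℕ := gnsF s p with hf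
  set M : ℕ := m.properDivisors.sup f with hM
  have hm0 : m ≠ 0 := by omega
  set T : Finset ℕ := m.divisors.filter (fun d => c ≤ f d) with hT
  have hstep : ∑ e ∈ m.divisors, (moebius (m / e) : ℤ) * (if c ≤ f e then 1 else 0)
      = ∑ e ∈ T, (moebius (m / e) : ℤ) := by
    rw [hT, Finset.sum_filter]
    apply Finset.sum_congr rfl
    intro e _
    by_cases h : c ≤ f e <;> simp [h]
  have hmT : m ∈ T := by
    rw [hT, Finset.mem_filter, Nat.mem_divisors]
    exact ⟨⟨dvd_refl m, hm0⟩, hcm⟩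
  set g : ℕ := T.gcd _root_.id with hg
  have hgm : g ∣ m := Finset.gcd_dvd hmT
  have hgpos : 0 < g := by
    rcases Nat.eq_zero_or_pos g with h | h
    · rw [h] at hgm; exact absurd (Nat.eq_zero_of_zero_dvd hgm) hm0
    · exact h
  have claim : ∀ T' : Finset ℕ, (∀ x ∈ T', 0 < x ∧ c ≤ f x) →
      T'.gcd _root_.id = 0 ∨ (0 < T'.gcd _root_.id ∧ c ≤ f (T'.gcd _root_.id)) := by
    intro T'
    induction T' using Finset.induction_on with
    | empty => intro _; left; simp
    | insert a Tn han ih =>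
      intro h
      right
      have h2 := h a (Finset.mem_insert_self a Tn)
      rw [Finset.gcd_insert]
      have hid : GCDMonoid.gcd (_root_.id a) (Tn.gcd _root_.id) = Nat.gcd a (Tn.gcd _root_.id) := rfl
      rw [hid]
      rcases ih (fun x hx => h x (Finset.mem_insert_of_mem hx)) with h1 | h1
      · rw [h1, Nat.gcd_zero_right]
        exact h2
      · constructor
        · exact Nat.gcd_pos_of_pos_left _ h2.1
        · rw [hf, gnsF_min h0 hne hdvd p h2.1 h1.1]
          rw [hf] at h1 h2
          omega
  have hkey : 0 < g ∧ c ≤ f g := by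
    rcases claim T (by
      intro x hx
      rw [hT, Finset.mem_filter] at hx
      exact ⟨Nat.pos_of_mem_divisors hx.1, hx.2⟩) with h | h
    · rw [← hg] at h; omega
    · rw [← hg] at h; exact h
  have hcg : c ≤ f g := hkey.2
  have hchar : ∀ d ∈ m.divisors, (c ≤ f d ↔ g ∣ d) := by
    intro d hdm
    constructor
    · intro h
      have hdT : d ∈ T := by rw [hT, Finset.mem_filter]; exact ⟨hdm, h⟩
      exact Finset.gcd_dvd hdT
    · intro h
      have := gnsF_mono h0 hne hdvd p hgpos h (Nat.pos_of_mem_divisors hdm)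
      rw [← hf] at this
      omega
  have hTfilt : T = m.divisors.filter (fun d => g ∣ d) := by
    rw [hT]
    apply Finset.filter_congr
    intro d hdm
    simpa using hchar d hdm
  have hsum2 : ∑ e ∈ T, (moebius (m / e) : ℤ) = ∑ e ∈ (m / g).divisors, (moebius ((m / g) / e) : ℤ) := by
    rw [hTfilt]
    apply Finset.sum_nbij' (fun d => d / g) (fun e => g * e)
    · intro d hd
      rw [Finset.mem_filter, Nat.mem_divisors] at hd
      rw [Nat.mem_divisors]
      obtain ⟨d', rfl⟩ := hd.2
      obtain ⟨k, hk⟩ := hd.1.1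
      constructor
      · refine ⟨k, ?_⟩
        rw [Nat.mul_div_cancel_left _ hgpos, hk, mul_assoc, Nat.mul_div_cancel_left _ hgpos]
      · intro hzero
        rw [Nat.div_eq_zero_iff, or_iff_right (by omega)] at hzero
        have := Nat.le_of_dvd (by omega) hgm
        omega
    · intro e he
      rw [Nat.mem_divisors] at he
      rw [Finset.mem_filter, Nat.mem_divisors]
      refine ⟨⟨?_, hm0⟩, Dvd.intro e rfl⟩
      calc g * e ∣ g * (m / g) := mul_dvd_mul_left g he.1
        _ = m := Nat.mul_div_cancel' hgm
    · intro d hd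
      rw [Finset.mem_filter] at hd
      exact Nat.mul_div_cancel' hd.2
    · intro e _
      exact Nat.mul_div_cancel_left e hgpos
    · intro d hd
      rw [Finset.mem_filter] at hd
      congr 1
      rw [Nat.div_div_eq_div_mul]
      congr 1
      rw [Nat.mul_div_cancel' hd.2]
  have hsum3 : ∑ e ∈ (m / g).divisors, (moebius ((m / g) / e) : ℤ) = if m / g = 1 then 1 else 0 := by
    rw [Nat.sum_div_divisors]
    have := ArithmeticFunction.coe_mul_zeta_apply (f := moebius) (x := m / g)
    rw [ArithmeticFunction.moebius_mul_coe_zeta] at this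
    rw [← this, ArithmeticFunction.one_apply]
  have hdiv1 : m / g = 1 ↔ g = m := by
    constructor
    · intro h
      have := Nat.mul_div_cancel' hgm
      rw [h, mul_one] at this
      exact this
    · intro h
      rw [h, Nat.div_self (by omega)]
  have hgM : g = m ↔ M < c := by
    constructor
    · intro hgeq
      by_contra hMc
      push_neg at hMc
      have hPne : m.properDivisors.Nonempty :=
        ⟨1, Nat.one_mem_properDivisors_iff_one_lt.mpr (by omega)⟩
      obtain ⟨e, heP, heM⟩ := Finset.exists_mem_eq_sup m.properDivisors hPne f
      rw [Nat.mem_properDivisors] at heP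
      have heT : e ∈ T := by
        rw [hT, Finset.mem_filter, Nat.mem_divisors]
        exact ⟨⟨heP.1, hm0⟩, by rw [hM] at hMc; omega⟩
      have : g ∣ e := Finset.gcd_dvd heT
      rw [hgeq] at this
      have hepos : 0 < e := Nat.pos_of_dvd_of_pos heP.1 (by omega)
      have := Nat.le_of_dvd hepos this
      omega
    · intro hMc
      have hTm : T = {m} := by
        apply Finset.eq_singleton_iff_unique_mem.mpr
        refine ⟨hmT, ?_⟩
        intro d hdT
        rw [hT, Finset.mem_filter, Nat.mem_divisors] at hdT
        by_contra hdm
        have hdP : d ∈ m.properDivisors := by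
          rw [Nat.mem_properDivisors]
          exact ⟨hdT.1.1, lt_of_le_of_ne (Nat.le_of_dvd (by omega) hdT.1.1) hdm⟩
        have : f d ≤ M := Finset.le_sup (f := f) hdP
        omega
      rw [hg, hTm]
      simp
  rw [hstep, hsum2, hsum3]
  by_cases h : M < c
  · rw [if_pos ((hdiv1.trans hgM).mpr h), if_pos h]
  · rw [if_neg (fun hh => h ((hdiv1.trans hgM).mp hh)), if_neg h]

include h0 hne hdvd in
lemma gns_ident (m p : ℕ) (hm2 : 2 ≤ m) :
    ∑ e ∈ m.divisors, (moebius (m / e) : ℤ) * (gnsF s p e : ℤ)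
      = (gnsF s p m : ℤ) - ((m.properDivisors.sup (gnsF s p) : ℕ) : ℤ) := by
  classical
  have hm0 : m ≠ 0 := by omega
  have hfd : ∀ d ∈ m.divisors, gnsF s p d ≤ gnsF s p m := by
    intro d hdm
    exact gnsF_mono h0 hne hdvd p (Nat.pos_of_mem_divisors hdm)
      (Nat.mem_divisors.mp hdm).1 (by omega)
  have hMfm : m.properDivisors.sup (gnsF s p) ≤ gnsF s p m :=
    Finset.sup_le fun e he =>
      hfd e (Nat.mem_divisors.mpr ⟨(Nat.mem_properDivisors.mp he).1, hm0⟩)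
  set M : ℕ := m.properDivisors.sup (gnsF s p) with hM
  calc ∑ e ∈ m.divisors, (moebius (m / e) : ℤ) * (gnsF s p e : ℤ)
      = ∑ e ∈ m.divisors, (moebius (m / e) : ℤ) *
          (∑ c ∈ Finset.Icc 1 (gnsF s p m), if c ≤ gnsF s p e then (1:ℤ) else 0) := by
        apply Finset.sum_congr rfl
        intro e he
        congr 1
        rw [Finset.sum_boole]
        have hfil : (Finset.Icc 1 (gnsF s p m)).filter (fun c => c ≤ gnsF s p e)
            = Finset.Icc 1 (gnsF s p e) := by
          ext c
          simp only [Finset.mem_filter, Finset.mem_Icc]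
          have := hfd e he
          omega
        rw [hfil, Nat.card_Icc]
        simp
    _ = ∑ c ∈ Finset.Icc 1 (gnsF s p m), ∑ e ∈ m.divisors,
          (moebius (m / e) : ℤ) * (if c ≤ gnsF s p e then (1:ℤ) else 0) := by
        simp_rw [Finset.mul_sum]
        rw [Finset.sum_comm]
    _ = ∑ c ∈ Finset.Icc 1 (gnsF s p m), (if M < c then (1:ℤ) else 0) := by
        apply Finset.sum_congr rfl
        intro c hc
        rw [Finset.mem_Icc] at hc
        exact gns_inner h0 hne hdvd m p c hm2 hc.1 hc.2
    _ = (gnsF s p m : ℤ) - (M : ℤ) := by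
        rw [Finset.sum_boole]
        have hfil : (Finset.Icc 1 (gnsF s p m)).filter (fun c => M < c)
            = Finset.Icc (M + 1) (gnsF s p m) := by
          ext c
          simp only [Finset.mem_filter, Finset.mem_Icc]
          omega
        rw [hfil, Nat.card_Icc]
        push_cast
        omega

lemma gns_mu_tri (x : ℕ) : moebius x = 1 ∨ moebius x = -1 ∨ moebius x = 0 := by
  by_cases hsq : Squarefree x
  · rw [ArithmeticFunction.moebius_apply_of_squarefree hsq]
    rcases Nat.even_or_odd (ArithmeticFunction.cardFactors x) with h | h
    · left; exact Even.neg_one_pow h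
    · right; left; exact Odd.neg_one_pow h
  · right; right; exact ArithmeticFunction.moebius_eq_zero_of_not_squarefree hsq

include h0 hne hdvd in
lemma gns_key_s12 (m : ℕ) (hm2 : 2 ≤ m) (Φ : ℤ)
    (hΦ : (Φ : ℚ) = ∏ e ∈ m.divisors, (s e : ℚ) ^ (moebius (m / e))) :
    Φ * ((m.properDivisors.lcm (gnsT s) : ℕ) : ℤ) = s m := by
  classical
  have hm0 : m ≠ 0 := by omega
  set A : ℕ := ∏ e ∈ m.divisors.filter (fun e => moebius (m / e) = 1), gnsT s e with hA
  set B : ℕ := ∏ e ∈ m.divisors.filter (fun e => moebius (m / e) = -1), gnsT s e with hB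
  set L : ℕ := m.properDivisors.lcm (gnsT s) with hL
  have htne : ∀ e ∈ m.divisors, gnsT s e ≠ 0 := fun e he =>
    gnsT_ne_zero h0 hne (Nat.pos_of_mem_divisors he)
  have hA0 : A ≠ 0 := Finset.prod_ne_zero_iff.mpr
    (fun e he => htne e (Finset.mem_filter.mp he).1)
  have hB0 : B ≠ 0 := Finset.prod_ne_zero_iff.mpr
    (fun e he => htne e (Finset.mem_filter.mp he).1)
  have hL0 : L ≠ 0 := by
    intro h
    obtain ⟨x, hx, h'⟩ := Finset.lcm_eq_zero_iff.mp h
    exact gnsT_ne_zero h0 hne (Nat.pos_of_mem_divisors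
      (Nat.mem_divisors.mpr ⟨(Nat.mem_properDivisors.mp hx).1, hm0⟩)) h'
  have htm0 : gnsT s m ≠ 0 := gnsT_ne_zero h0 hne (by omega)
  -- the natural number identity A * L = B * t m
  have hNat : A * L = B * gnsT s m := by
    apply Nat.eq_of_factorization_eq (by positivity) (by positivity)
    intro p
    rw [Nat.factorization_mul hA0 hL0, Nat.factorization_mul hB0 htm0]
    rw [Finsupp.add_apply, Finsupp.add_apply]
    rw [hA, hB, Nat.factorization_prod (fun e he => htne e (Finset.mem_filter.mp he).1),
      Nat.factorization_prod (fun e he => htne e (Finset.mem_filter.mp he).1)]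
    rw [Finsupp.finset_sum_apply, Finsupp.finset_sum_apply]
    rw [hL, gns_lcm_fact m.properDivisors (gnsT s)
      (fun e he => gnsT_ne_zero h0 hne (Nat.pos_of_mem_divisors
        (Nat.mem_divisors.mpr ⟨(Nat.mem_properDivisors.mp he).1, hm0⟩)))]
    -- now a statement about gnsF
    have hident := gns_ident h0 hne hdvd m p hm2
    have hsplit : ∑ e ∈ m.divisors, (moebius (m / e) : ℤ) * (gnsF s p e : ℤ)
        = (∑ e ∈ m.divisors.filter (fun e => moebius (m / e) = 1), (gnsF s p e : ℤ))
          - ∑ e ∈ m.divisors.filter (fun e => moebius (m / e) = -1), (gnsF s p e : ℤ) := by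
      rw [Finset.sum_filter, Finset.sum_filter, ← Finset.sum_sub_distrib]
      apply Finset.sum_congr rfl
      intro e _
      rcases gns_mu_tri (m / e) with h | h | h <;> rw [h] <;> simp
    rw [hsplit] at hident
    have hMle : m.properDivisors.sup (gnsF s p) ≤ gnsF s p m :=
      Finset.sup_le fun e he =>
        gnsF_mono h0 hne hdvd p
          (Nat.pos_of_mem_divisors (Nat.mem_divisors.mpr ⟨(Nat.mem_properDivisors.mp he).1, hm0⟩))
          (Nat.mem_properDivisors.mp he).1 (by omega)
    have : ∀ e, (gnsT s e).factorization p = gnsF s p e := fun e => rfl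
    simp only [this]
    rw [← Nat.cast_sum, ← Nat.cast_sum] at hident
    have hsupeq : (m.properDivisors.sup fun x => gnsF s p x) = m.properDivisors.sup (gnsF s p) := rfl
    omega
  -- the rational identity Φ * B = A
  have hQ : (Φ : ℚ) * (B : ℚ) = (A : ℚ) := by
    rw [hΦ]
    have hcast : ∀ e ∈ m.divisors, (s e : ℚ) = ((gnsT s e : ℕ) : ℚ) := by
      intro e he
      have := gnsT_cast h0 hne (s := s) e
      exact_mod_cast congrArg (fun z : ℤ => (z : ℚ)) this.symm
    rw [Finset.prod_congr rfl (fun e he => by rw [hcast e he])]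
    rw [← Finset.prod_filter_mul_prod_filter_not m.divisors (fun e => moebius (m / e) = 1)
      (fun e => ((gnsT s e : ℕ) : ℚ) ^ (moebius (m / e)))]
    have h1 : ∏ e ∈ m.divisors.filter (fun e => moebius (m / e) = 1),
        ((gnsT s e : ℕ) : ℚ) ^ (moebius (m / e)) = (A : ℚ) := by
      rw [hA]
      push_cast
      apply Finset.prod_congr rfl
      intro e he
      rw [(Finset.mem_filter.mp he).2]
      simp
    have h2 : ∏ e ∈ m.divisors.filter (fun e => ¬ moebius (m / e) = 1),
        ((gnsT s e : ℕ) : ℚ) ^ (moebius (m / e)) = (B : ℚ)⁻¹ := by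
      rw [← Finset.prod_filter_mul_prod_filter_not
        (m.divisors.filter (fun e => ¬ moebius (m / e) = 1)) (fun e => moebius (m / e) = -1)
        (fun e => ((gnsT s e : ℕ) : ℚ) ^ (moebius (m / e)))]
      have h3 : (m.divisors.filter (fun e => ¬ moebius (m / e) = 1)).filter
          (fun e => moebius (m / e) = -1) = m.divisors.filter (fun e => moebius (m / e) = -1) := by
        rw [Finset.filter_filter]
        apply Finset.filter_congr
        intro e _
        constructor
        · intro h; exact h.2
        · intro h; exact ⟨by rw [h]; decide, h⟩
      rw [h3]
      have h4 : ∏ e ∈ m.divisors.filter (fun e => moebius (m / e) = -1),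
          ((gnsT s e : ℕ) : ℚ) ^ (moebius (m / e)) = (B : ℚ)⁻¹ := by
        rw [hB]
        push_cast
        rw [← Finset.prod_inv_distrib]
        apply Finset.prod_congr rfl
        intro e he
        rw [(Finset.mem_filter.mp he).2]
        simp [zpow_neg_one]
      have h5 : ∏ e ∈ (m.divisors.filter (fun e => ¬ moebius (m / e) = 1)).filter
          (fun e => ¬ moebius (m / e) = -1), ((gnsT s e : ℕ) : ℚ) ^ (moebius (m / e)) = 1 := by
        apply Finset.prod_eq_one
        intro e he
        rw [Finset.filter_filter, Finset.mem_filter] at he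
        have h0' : moebius (m / e) = 0 := by
          rcases gns_mu_tri (m / e) with h | h | h
          · exact absurd h he.2.1
          · exact absurd h he.2.2
          · exact h
        rw [h0']
        simp
      rw [h4, h5, mul_one]
    rw [h1, h2]
    field_simp
  -- combine
  have hBQ : (B : ℚ) ≠ 0 := Nat.cast_ne_zero.mpr hB0
  have hQ2 : (Φ : ℚ) * (L : ℚ) = ((gnsT s m : ℕ) : ℚ) := by
    have hcast : ((A : ℕ) : ℚ) * (L : ℚ) = (B : ℚ) * ((gnsT s m : ℕ) : ℚ) := by
      exact_mod_cast congrArg (fun n : ℕ => (n : ℚ)) hNat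
    have : (Φ : ℚ) * (L : ℚ) * (B : ℚ) = ((gnsT s m : ℕ) : ℚ) * (B : ℚ) := by
      calc (Φ : ℚ) * (L : ℚ) * (B : ℚ) = ((Φ : ℚ) * (B : ℚ)) * (L : ℚ) := by ring
        _ = (A : ℚ) * (L : ℚ) := by rw [hQ]
        _ = (B : ℚ) * ((gnsT s m : ℕ) : ℚ) := hcast
        _ = ((gnsT s m : ℕ) : ℚ) * (B : ℚ) := by ring
    exact mul_right_cancel₀ hBQ this
  have : Φ * ((L : ℕ) : ℤ) = ((gnsT s m : ℕ) : ℤ) := by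
    exact_mod_cast hQ2
  rw [this, gnsT_cast h0 hne m]

end GNS

open Finset in
/-- For a nonnegative generalized n-series over `ℤ`, if `a ≡ b ≢ 0 (mod m)` and
`d = gcd(a,m) = gcd(b,m)`, then `s a / s d ≡ s b / s d (mod Φ_m(s))`, and both
sides are units modulo `Φ_m(s)`. -/
theorem GNS_phi_congruence (s : ℕ → ℤ)
    (h0 : s 0 = 0)
    (hne : ∀ n : ℕ, 0 < n → 0 < s n)
    (hdvd : ∀ n k : ℕ, 0 < k → k < n → s (n - k) ∣ s n - s k)
    (m a b : ℕ) (hm : 0 < m) (hab : a % m = b % m) (ha : a % m ≠ 0)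
    (d : ℕ) (hd : d = Nat.gcd a m)
    (Φ : ℤ)
    (hΦ : (Φ : ℚ) = ∏ e ∈ m.divisors, (s e : ℚ) ^ (ArithmeticFunction.moebius (m / e)))
    (u v : ℤ) (hu : s d * u = s a) (hv : s d * v = s b) :
    Φ ∣ u - v ∧ IsCoprime u Φ ∧ IsCoprime v Φ := by
  have hm2 : 2 ≤ m := by
    rcases Nat.lt_or_ge m 2 with h | h
    · interval_cases m
      · exact absurd (Nat.mod_one a) ha
    · exact h
  have hb : b % m ≠ 0 := by rw [← hab]; exact ha
  have hapos : 0 < a := by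
    rcases Nat.eq_zero_or_pos a with h | h
    · subst h; simp at ha
    · exact h
  have hbpos : 0 < b := by
    rcases Nat.eq_zero_or_pos b with h | h
    · subst h; simp at hb
    · exact h
  have hdm : d ∣ m := hd ▸ Nat.gcd_dvd_right a m
  have hdpos : 0 < d := hd ▸ Nat.gcd_pos_of_pos_right a hm
  have hdb : d = Nat.gcd b m := by
    rw [hd, Nat.gcd_comm a m, Nat.gcd_comm b m, Nat.gcd_rec m a, Nat.gcd_rec m b, hab]
  have hdne : d ≠ m := by
    intro h
    apply ha
    have hma : m ∣ a := by
      have := hd ▸ Nat.gcd_dvd_left a m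
      rwa [h] at this
    exact Nat.mod_eq_zero_of_dvd hma
  have hdlt : d < m := lt_of_le_of_ne (Nat.le_of_dvd hm hdm) hdne
  set L : ℕ := m.properDivisors.lcm (gnsT s) with hL
  have hkey : Φ * (L : ℤ) = s m := gns_key_s12 h0 hne hdvd m hm2 Φ hΦ
  have hsdL : s d ∣ (L : ℤ) := by
    have h1 : gnsT s d ∣ L := Finset.dvd_lcm (Nat.mem_properDivisors.mpr ⟨hdm, hdlt⟩)
    have := gnsT_cast h0 hne (s := s) d
    rw [← this]
    exact_mod_cast h1
  obtain ⟨L', hL'⟩ := hsdL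
  have hw : s m = s d * (Φ * L') := by rw [← hkey, hL']; ring
  have hsd0 : s d ≠ 0 := (hne d hdpos).ne'
  have hdvd_ab : s m ∣ s a - s b := by
    rcases lt_trichotomy a b with h | h | h
    · have h1 : s (b - a) ∣ s b - s a := hdvd b a hapos h
      have h2 : m ∣ b - a := (Nat.modEq_iff_dvd' h.le).mp hab
      have h3 : s m ∣ s b - s a := (gns_dvd_s12 h0 hdvd h2).trans h1
      exact dvd_sub_comm.mp h3
    · subst h; simp
    · have h1 : s (a - b) ∣ s a - s b := hdvd a b hbpos h
      have h2 : m ∣ a - b := (Nat.modEq_iff_dvd' h.le).mp hab.symm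
      exact (gns_dvd_s12 h0 hdvd h2).trans h1
  obtain ⟨k, hk⟩ := hdvd_ab
  have h1 : s d * (u - v) = s a - s b := by rw [mul_sub, hu, hv]
  have h2 : s d * (u - v) = s d * (Φ * L' * k) := by rw [h1, hk, hw]; ring
  have huv : u - v = Φ * L' * k := mul_left_cancel₀ hsd0 h2
  have part1 : Φ ∣ u - v := ⟨L' * k, by rw [huv]; ring⟩
  have copr : ∀ (x : ℕ) (ux : ℤ), 0 < x → Nat.gcd x m = d → s d * ux = s x → IsCoprime ux Φ := by
    intro x ux hx hgx hux
    have hgcd : (Int.gcd (s x) (s m) : ℤ) = s d := by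
      apply Int.dvd_antisymm (Int.natCast_nonneg _) (le_of_lt (hne d hdpos))
      · have := gns_gcd_dvd h0 hdvd (Int.gcd (s x) (s m) : ℤ) x m
          (Int.gcd_dvd_left _ _) (Int.gcd_dvd_right _ _)
        rwa [hgx] at this
      · exact Int.dvd_coe_gcd (gns_dvd_s12 h0 hdvd (hgx ▸ Nat.gcd_dvd_left x m))
          (gns_dvd_s12 h0 hdvd (hgx ▸ Nat.gcd_dvd_right x m))
    have hmul : Int.gcd (s d * ux) (s d * (Φ * L')) = (s d).natAbs * Int.gcd ux (Φ * L') :=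
      Int.gcd_mul_left _ _ _
    rw [hux, ← hw] at hmul
    have habs : ((s d).natAbs : ℤ) = s d := Int.natAbs_of_nonneg (le_of_lt (hne d hdpos))
    have hone : Int.gcd ux (Φ * L') = 1 := by
      have h3 : Int.gcd (s x) (s m) = (s d).natAbs := by
        rw [← habs] at hgcd
        exact_mod_cast hgcd
      have h4 : (s d).natAbs ≠ 0 := Int.natAbs_ne_zero.mpr hsd0
      rw [h3] at hmul
      exact Nat.eq_of_mul_eq_mul_left (Nat.pos_of_ne_zero h4) (by omega)
    have hcop : IsCoprime ux (Φ * L') := Int.isCoprime_iff_gcd_eq_one.mpr hone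
    exact hcop.of_isCoprime_of_dvd_right (dvd_mul_right Φ L')
  exact ⟨part1, copr a u hapos hd.symm hu, copr b v hbpos hdb.symm hv⟩
end

section
/- Let s be a strictly increasing generalized n-series over ℤ that is not a scalar multiple of n ↦ [n]_q for any positive integer q (with the convention [n]_1 = n). Then for every a ≥ 0 there exist constants C > 0 and N such that s(n) ≥ C·aⁿ for all n ≥ N; that is, s(n) = Ω(aⁿ) for every a. -/
open Finset in
theorem GNS_aux (s : ℕ → ℤ)
    (h0 : s 0 = 0) (h1 : s 1 = 1)
    (hdvd : ∀ n k : ℕ, 0 < k → k < n → s (n - k) ∣ s n - s k)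
    (hmono : StrictMono s)
    (hnot : ¬ ∃ q : ℕ, 0 < q ∧ ∀ n : ℕ, s n = ∑ i ∈ range n, (q : ℤ) ^ i)
    (a : ℕ) (ha : 1 ≤ a) :
    ∃ N k : ℕ, ∀ n ≥ N, (a : ℤ) ^ n ≤ (a : ℤ) ^ k * s n := by
  have hspos : ∀ n : ℕ, 0 < n → 0 < s n := by
    intro n hn; have := hmono hn; rwa [h0] at this
  have hns : ∀ n : ℕ, (n : ℤ) ≤ s n := by
    intro n; induction n with
    | zero => simp [h0]
    | succ n ih =>
      have := hmono (by omega : n < n + 1)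
      push_cast; omega
  set Q : ℤ := s 2 - 1 with hQdef
  have hQ1 : 1 ≤ Q := by
    have := hns 2; simp at this; omega
  -- get j0 where s differs from the Q-analogue
  have hex : ∃ j0 : ℕ, s j0 ≠ ∑ i ∈ range j0, Q ^ i := by
    by_contra hall
    push_neg at hall
    refine hnot ⟨Q.toNat, by omega, fun n => ?_⟩
    rw [hall n]
    congr 1
    rw [Int.toNat_of_nonneg (by omega)]
  obtain ⟨j0, hj0⟩ := hex
  have hj0pos : 0 < j0 := by
    rcases Nat.eq_zero_or_pos j0 with h | h
    · exfalso; apply hj0; rw [h]; simp [h0]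
    · exact h
  -- run lemma
  have hrun : ∀ j t : ℕ, (∀ i, i < j → s (t + i + 1) = Q * s (t + i) + 1) →
      s (t + j) = Q ^ j * s t + ∑ i ∈ range j, Q ^ i := by
    intro j
    induction j with
    | zero => intro t _; simp
    | succ j ih =>
      intro t h
      have h1' := ih t (fun i hi => h i (by omega))
      have h2 := h j (by omega)
      have : t + (j + 1) = t + j + 1 := by omega
      rw [this, h2, h1', geom_sum_succ, pow_succ]
      ring
  -- dichotomy lemma
  have hdich : ∀ p : ℕ, 1 ≤ p → Q < s p →
      s (p + 2) = Q * s (p + 1) + 1 ∨ s p * s (p + 1) ≤ s (p + 2) := by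
    intro p hp hQp
    have d1 : s (p + 1) ∣ s (p + 2) - 1 := by
      have := hdvd (p + 2) 1 one_pos (by omega)
      simpa [h1] using this
    obtain ⟨m, hm⟩ := d1
    have d2 : s p ∣ s (p + 1) - 1 := by
      have := hdvd (p + 1) 1 one_pos (by omega)
      simpa [h1] using this
    obtain ⟨m', hm'⟩ := d2
    have d3 : s p ∣ s (p + 2) - s 2 := by
      have := hdvd (p + 2) 2 (by omega) (by omega)
      simpa using this
    have key : s p ∣ m - Q := by
      have heq : m - Q = (s (p + 2) - s 2) - s p * (m' * m) := by
        have e1 : s (p + 2) = s (p + 1) * m + 1 := by omega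
        have e2 : s (p + 1) = s p * m' + 1 := by omega
        have e3 : s 2 = Q + 1 := by omega
        rw [e1, e2, e3]; ring
      rw [heq]
      exact dvd_sub d3 ⟨m' * m, rfl⟩
    have hppos : 0 < s p := hspos p (by omega)
    have hp1pos : 0 < s (p + 1) := hspos (p + 1) (by omega)
    have hm1 : 1 ≤ m := by
      by_contra hcon
      push_neg at hcon
      have hm0 : m ≤ 0 := by omega
      have : s (p + 1) * m ≤ 0 := mul_nonpos_of_nonneg_of_nonpos hp1pos.le hm0
      have h2' : s (p + 1) + 1 ≤ s (p + 2) := by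
        have := hmono (show p + 1 < p + 2 by omega); omega
      omega
    by_cases hmQ : m = Q
    · left; rw [hmQ] at hm; linear_combination hm
    · right
      have hbig : s p ≤ m - Q := by
        rcases lt_trichotomy (m - Q) 0 with hlt | heq0 | hgt
        · have := Int.le_of_dvd (by omega) (dvd_neg.mpr key)
          -- s p ≤ -(m - Q) = Q - m, so m ≤ Q - s p < 1, contradiction
          exfalso; omega
        · exfalso; omega
        · exact Int.le_of_dvd hgt key
      have : s p + Q ≤ m := by omega
      nlinarith [mul_le_mul_of_nonneg_left this hp1pos.le]
  set G : ℤ := ∑ i ∈ range j0, Q ^ i with hG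
  have hGne : G - s j0 ≠ 0 := sub_ne_zero.mpr (Ne.symm hj0)
  set B : ℕ := (G - s j0).natAbs with hB
  -- window lemma
  have hwin : ∀ t : ℕ, B + 1 ≤ t → Q.toNat + 2 ≤ t →
      ((t : ℤ) - 1) * s t ≤ s (t + j0) := by
    intro t hBt hQt
    have hQtoNat : (Q.toNat : ℤ) = Q := Int.toNat_of_nonneg (by omega)
    by_cases hall : ∀ i, i < j0 → s (t + i + 1) = Q * s (t + i) + 1
    · exfalso
      have heq := hrun j0 t hall
      have hd : s t ∣ s (t + j0) - s j0 := by
        have := hdvd (t + j0) j0 hj0pos (by omega)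
        simpa using this
      have hdG : s t ∣ G - s j0 := by
        have e : G - s j0 = (s (t + j0) - s j0) - s t * Q ^ j0 := by
          rw [heq]; ring
        rw [e]
        exact dvd_sub hd ⟨Q ^ j0, rfl⟩
      have hle : s t ≤ |G - s j0| :=
        Int.le_of_dvd (abs_pos.mpr hGne) ((dvd_abs _ _).mpr hdG)
      have habs : |G - s j0| = (B : ℤ) := by rw [hB, Int.abs_eq_natAbs]
      have hts := hns t
      rw [habs] at hle
      have : (B : ℤ) + 1 ≤ (t : ℤ) := by exact_mod_cast hBt
      omega
    · push_neg at hall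
      obtain ⟨i, hij, hne'⟩ := hall
      obtain ⟨u, rfl⟩ : ∃ u, t = u + 1 := ⟨t - 1, by omega⟩
      have hu1 : 1 ≤ u := by
        have : 1 ≤ Q.toNat := by omega
        omega
      have hQsp : Q < s (u + i) := by
        have h1' := hns (u + i)
        have h2' : Q.toNat + 1 ≤ u + i := by omega
        have : ((Q.toNat : ℕ) : ℤ) + 1 ≤ ((u + i : ℕ) : ℤ) := by exact_mod_cast h2'
        rw [hQtoNat] at this
        omega
      rcases hdich (u + i) (by omega) hQsp with h | h
      · exfalso
        apply hne'
        rw [show u + 1 + i + 1 = u + i + 2 by omega, show u + 1 + i = u + i + 1 by omega]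
        exact h
      · have c1 : s (u + i + 2) ≤ s (u + 1 + j0) := hmono.monotone (by omega)
        have c2 : s (u + 1) ≤ s (u + i + 1) := hmono.monotone (by omega)
        have c3 : s u ≤ s (u + i) := hmono.monotone (by omega)
        have hupos : 0 < s u := hspos u (by omega)
        have hu1pos : 0 < s (u + 1) := hspos (u + 1) (by omega)
        have e2 : s u * s (u + 1) ≤ s (u + i) * s (u + i + 1) :=
          mul_le_mul c3 c2 hu1pos.le (by linarith)
        have e1 : ((u : ℤ)) * s (u + 1) ≤ s u * s (u + 1) :=
          mul_le_mul_of_nonneg_right (hns u) hu1pos.le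
        have efin : (((u + 1 : ℕ) : ℤ) - 1) * s (u + 1) = (u : ℤ) * s (u + 1) := by
          push_cast; ring
        rw [efin]
        linarith
  -- final assembly
  set N : ℕ := max (max (B + 1) (Q.toNat + 2)) (a ^ j0 + 1) with hN
  refine ⟨N, N + j0, ?_⟩
  have ha' : (1 : ℤ) ≤ (a : ℤ) := by exact_mod_cast ha
  have main : ∀ n, N ≤ n → (a : ℤ) ^ n ≤ (a : ℤ) ^ (N + j0) * s n := by
    intro n
    induction n using Nat.strong_induction_on with
    | _ n ih =>
      intro hNn
      by_cases hcase : n < N + j0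
      · have hs1 : 1 ≤ s n := by
          have := hns n
          have : (1 : ℤ) ≤ (n : ℤ) := by
            have : 1 ≤ n := by omega
            exact_mod_cast this
          linarith [hns n]
        have hpow : (a : ℤ) ^ n ≤ (a : ℤ) ^ (N + j0) :=
          pow_le_pow_right₀ ha' (by omega)
        nlinarith [pow_nonneg (by linarith : (0:ℤ) ≤ (a:ℤ)) (N + j0)]
      · obtain ⟨t, rfl⟩ : ∃ t, n = t + j0 := ⟨n - j0, by omega⟩
        have hTt : N ≤ t := by omega
        have IH := ih t (by omega) hTt
        have hw := hwin t (by omega) (by omega)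
        have haj : (a : ℤ) ^ j0 ≤ (t : ℤ) - 1 := by
          have h2' : a ^ j0 + 1 ≤ t := by omega
          have : ((a ^ j0 + 1 : ℕ) : ℤ) ≤ ((t : ℕ) : ℤ) := by exact_mod_cast h2'
          push_cast at this
          linarith
        have hstpos : 0 < s t := hspos t (by omega)
        have hanneg : (0 : ℤ) ≤ (a : ℤ) ^ j0 := by positivity
        have hNneg : (0 : ℤ) ≤ (a : ℤ) ^ (N + j0) := by positivity
        calc (a : ℤ) ^ (t + j0) = (a : ℤ) ^ t * (a : ℤ) ^ j0 := by rw [pow_add]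
          _ ≤ ((a : ℤ) ^ (N + j0) * s t) * (a : ℤ) ^ j0 :=
              mul_le_mul_of_nonneg_right IH hanneg
          _ = (a : ℤ) ^ (N + j0) * (s t * (a : ℤ) ^ j0) := by ring
          _ ≤ (a : ℤ) ^ (N + j0) * (s t * ((t : ℤ) - 1)) := by
              apply mul_le_mul_of_nonneg_left _ hNneg
              exact mul_le_mul_of_nonneg_left haj hstpos.le
          _ = (a : ℤ) ^ (N + j0) * (((t : ℤ) - 1) * s t) := by ring
          _ ≤ (a : ℤ) ^ (N + j0) * s (t + j0) :=
              mul_le_mul_of_nonneg_left hw hNneg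
  exact main
open Finset in
/-- A strictly increasing generalized n-series over `ℤ` which is not a scalar
multiple of `n ↦ [n]_q` for any positive integer `q` grows faster than any
exponential: `s n = Ω(aⁿ)` for every `a ≥ 0`. -/
theorem GNS_growth (s : ℕ → ℤ)
    (h0 : s 0 = 0)
    (hne : ∀ n : ℕ, 0 < n → s n ≠ 0)
    (hdvd : ∀ n k : ℕ, 0 < k → k < n → s (n - k) ∣ s n - s k)
    (hmono : StrictMono s)
    (hnot : ¬ ∃ (c : ℤ) (q : ℕ), 0 < q ∧
      ∀ n : ℕ, s n = c * ∑ i ∈ range n, (q : ℤ) ^ i)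
    (a : ℕ) :
    ∃ C : ℚ, 0 < C ∧ ∃ N : ℕ, ∀ n ≥ N, C * (a : ℚ) ^ n ≤ (s n : ℚ) := by
  have hspos : ∀ n : ℕ, 0 < n → 0 < s n := by
    intro n hn; have := hmono hn; rwa [h0] at this
  by_cases ha0 : a = 0
  · subst ha0
    refine ⟨1, one_pos, 1, fun n hn => ?_⟩
    rw [Nat.cast_zero, zero_pow (by omega : n ≠ 0), one_mul]
    have : (0 : ℤ) < s n := hspos n (by omega)
    have h2 : (0 : ℚ) < (s n : ℚ) := by exact_mod_cast this
    linarith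
  have ha : 1 ≤ a := by omega
  -- s 1 divides every s n
  have hc : ∀ n : ℕ, s 1 ∣ s n := by
    intro n
    induction n with
    | zero => simp [h0]
    | succ n ihn =>
      match n, ihn with
      | 0, _ => exact dvd_refl _
      | Nat.succ n', ihn =>
        have hd := hdvd (n' + 2) (n' + 1) (by omega) (by omega)
        simp only [show n' + 2 - (n' + 1) = 1 by omega] at hd
        have := dvd_add hd ihn
        simpa using this
  have hcpos : 0 < s 1 := hspos 1 one_pos
  set c : ℤ := s 1 with hcdef
  set t : ℕ → ℤ := fun n => s n / c with htdef
  have hct : ∀ n, c * t n = s n := fun n => Int.mul_ediv_cancel' (hc n)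
  have t0 : t 0 = 0 := by
    have := hct 0; rw [h0] at this
    exact (mul_eq_zero.mp this).resolve_left (by omega)
  have t1 : t 1 = 1 := by
    have := hct 1
    have : c * t 1 = c * 1 := by rw [this]; ring
    exact mul_left_cancel₀ (by omega) this
  have tmono : StrictMono t := by
    intro x y hxy
    have := hmono hxy
    rw [← hct x, ← hct y] at this
    exact lt_of_mul_lt_mul_left this hcpos.le
  have tdvd : ∀ n k : ℕ, 0 < k → k < n → t (n - k) ∣ t n - t k := by
    intro n k hk hkn
    obtain ⟨e, he⟩ := hdvd n k hk hkn
    refine ⟨e, mul_left_cancel₀ (show c ≠ 0 by omega) ?_⟩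
    rw [mul_sub, hct, hct, he, ← hct (n - k)]
    ring
  have tnot : ¬ ∃ q : ℕ, 0 < q ∧ ∀ n : ℕ, t n = ∑ i ∈ range n, (q : ℤ) ^ i := by
    rintro ⟨q, hq, hqt⟩
    exact hnot ⟨c, q, hq, fun n => by rw [← hct n, hqt n]⟩
  obtain ⟨N, k, hNk⟩ := GNS_aux t t0 t1 tdvd tmono tnot a ha
  refine ⟨((a : ℚ) ^ k)⁻¹, by positivity, max N 1, fun n hn => ?_⟩
  have h1 := hNk n (le_trans (le_max_left _ _) hn)
  have htpos : 0 < t n := by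
    have := tmono (show 0 < n by omega)
    rwa [t0] at this
  have hts : t n ≤ s n := by
    rw [← hct n]
    nlinarith [hcpos, htpos]
  have hZ : (a : ℤ) ^ n ≤ (a : ℤ) ^ k * s n :=
    le_trans h1 (mul_le_mul_of_nonneg_left hts (by positivity))
  rw [inv_mul_le_iff₀ (by positivity)]
  have hQ : (a : ℚ) ^ n ≤ (a : ℚ) ^ k * (s n : ℚ) := by exact_mod_cast hZ
  linarith
end

section
/- Let s be a generalized n-series over R and define the R-bilinear operation ⋆_s on R[x] by x^a ⋆_s x^b = c_s(a+b+1, a)·x^{a+b}, where c_s(n,k) = (s(n)-s(k))/s(n-k). Then the s-derivative ∇_s (the R-linear map with ∇_s(x^n) = s(n)x^{n-1}) satisfies the product rule ∇_s(fg) = ∇_s(f)·g + f ⋆_s ∇_s(g) for all f, g ∈ R[x]. -/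
open Polynomial in
/-- The s-product rule: `∇_s (f g) = ∇_s f · g + f ⋆_s ∇_s g`, where `⋆_s` is the
bilinear operation with `x^a ⋆_s x^b = c_s(a+b+1, a) x^(a+b)`. -/
theorem s_product_rule {R : Type*} [CommRing R] (s : ℕ → R)
    (h0 : s 0 = 0)
    (hreg : ∀ n : ℕ, 0 < n → s n ∈ nonZeroDivisors R)
    (hdvd : ∀ n k : ℕ, 0 < k → k < n → s (n - k) ∣ s n - s k)
    (D : R[X] →ₗ[R] R[X]) (hD0 : D 1 = 0)
    (hD : ∀ n : ℕ, D (X ^ (n + 1)) = s (n + 1) • X ^ n)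
    (M : R[X] →ₗ[R] R[X] →ₗ[R] R[X])
    (hM : ∀ a b : ℕ, ∃ c : R,
      s (b + 1) * c = s (a + b + 1) - s a ∧ M (X ^ a) (X ^ b) = c • X ^ (a + b)) :
    ∀ f g : R[X], D (f * g) = D f * g + M f (D g) := by
  have key : ∀ a b : ℕ, D (X ^ a * X ^ b) = D (X ^ a) * X ^ b + M (X ^ a) (D (X ^ b)) := by
    intro a b
    cases b with
    | zero => simp [hD0]
    | succ m =>
      rw [hD m, map_smul]
      obtain ⟨c, hc1, hc2⟩ := hM a m
      cases a with
      | zero =>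
        simp only [Nat.zero_add] at hc1
        have hmem := hreg (m + 1) (Nat.succ_pos m)
        have h1 : (c - 1) * s (m + 1) = 0 := by linear_combination hc1 - h0
        have hc : c = 1 := sub_eq_zero.mp (hmem.2 _ h1)
        simp only [Nat.zero_add, pow_zero] at hc2
        simp [hc2, hc, hD m, hD0]
      | succ k =>
        have e2 : k + 1 + m = k + m + 1 := by omega
        have e3 : k + 1 + m + 1 = k + m + 1 + 1 := by omega
        rw [e2] at hc2
        rw [e3] at hc1
        have e1 : X ^ (k + 1) * X ^ (m + 1) = (X : R[X]) ^ (k + m + 1 + 1) := by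
          rw [← pow_add]; congr 1
        have e4 : X ^ k * X ^ (m + 1) = (X : R[X]) ^ (k + m + 1) := by
          rw [← pow_add]; congr 1
        rw [e1, hD (k + m + 1), hD k, hc2, smul_smul, smul_mul_assoc, e4, ← add_smul]
        congr 1
        linear_combination -hc1
  intro f g
  induction f using Polynomial.induction_on' with
  | add p q hp hq => simp only [add_mul, map_add, hp, hq, LinearMap.add_apply]; ring
  | monomial n r =>
    induction g using Polynomial.induction_on' with
    | add p q hp hq => simp only [mul_add, map_add, hp, hq]; ring
    | monomial b t =>
      have hm : ∀ (i : ℕ) (u : R), (monomial i u : R[X]) = u • X ^ i := by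
        intro i u
        rw [X_pow_eq_monomial, smul_monomial, smul_eq_mul, mul_one]
      rw [hm n r, hm b t, smul_mul_smul_comm, map_smul, key n b]
      simp only [map_smul, LinearMap.smul_apply, smul_mul_assoc, mul_smul_comm, smul_add,
        smul_smul]
      rw [mul_comm t r]
end

section
/- Let s be a generalized n-series over R such that s(1) is a unit in R/(s(p)) for a fixed p (e.g., s(1)=1). Then: (i) the kernel of the s-derivative ∇_s : R[x]/(s(p)) → R[x]/(s(p)) is the sub-R/(s(p))-module generated by {x^{np} : n ≥ 0}; (ii) the cokernel of ∇_s on R[x]/(s(p)) is free over R/(s(p)) with basis the classes of {x^{np-1}dx : n ≥ 1}. Equivalently, H⁰ and H¹ of the s-de Rham complex of the affine line modulo s(p) are each isomorphic to (R/(s(p)))[x^p]. -/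
open Polynomial

/-- `s k` divides `s (n * k)`. -/
theorem sc_mult {R : Type*} [CommRing R] (s : ℕ → R)
    (h0 : s 0 = 0)
    (hdvd : ∀ n k : ℕ, 0 < k → k < n → s (n - k) ∣ s n - s k)
    (k : ℕ) (hk : 0 < k) : ∀ n : ℕ, s k ∣ s (n * k) := by
  intro n
  induction n with
  | zero => simp [h0]
  | succ n ih =>
    rcases Nat.eq_zero_or_pos n with rfl | hn
    · simp
    · have he : (n + 1) * k = n * k + k := by ring
      have hlt : n * k < (n + 1) * k := by omega
      have h := hdvd ((n + 1) * k) (n * k) (Nat.mul_pos hn hk) hlt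
      have hsub : (n + 1) * k - n * k = k := by omega
      rw [hsub] at h
      have := dvd_add h ih
      simpa using this

/-- Modulo `s p`, the value `s (p * q + r)` equals `s r`. -/
theorem sc_shift {R : Type*} [CommRing R] (s : ℕ → R)
    (h0 : s 0 = 0)
    (hdvd : ∀ n k : ℕ, 0 < k → k < n → s (n - k) ∣ s n - s k)
    (p : ℕ) (hp : 0 < p) : ∀ q r : ℕ,
      Ideal.Quotient.mk (Ideal.span {s p}) (s (p * q + r))
        = Ideal.Quotient.mk (Ideal.span {s p}) (s r) := by
  intro q
  induction q with
  | zero => intro r; simp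
  | succ q ih =>
    intro r
    rcases Nat.eq_zero_or_pos (p * q + r) with h | h
    · have hq : q = 0 := by
        rcases Nat.eq_zero_or_pos q with h' | h'
        · exact h'
        · exfalso; have := Nat.mul_pos hp h'; omega
      have hr : r = 0 := by omega
      subst hq; subst hr
      have hps : p * (0 + 1) + 0 = p := by ring
      rw [hps, h0, map_zero, Ideal.Quotient.eq_zero_iff_mem]
      exact Ideal.subset_span rfl
    · have he : p * (q + 1) + r = (p * q + r) + p := by ring
      have hlt : p * q + r < p * (q + 1) + r := by omega
      have hsub : (p * (q + 1) + r) - (p * q + r) = p := by omega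
      have hd := hdvd (p * (q + 1) + r) (p * q + r) h hlt
      rw [hsub] at hd
      have : Ideal.Quotient.mk (Ideal.span {s p}) (s (p * (q + 1) + r))
          = Ideal.Quotient.mk (Ideal.span {s p}) (s (p * q + r)) := by
        rw [Ideal.Quotient.eq]
        exact Ideal.mem_span_singleton.mpr hd
      rw [this, ih r]

open Polynomial in
/-- The s-Cartier isomorphism for the affine line: modulo `s p`, the kernel of the
s-derivative on `R[x]/(s p)` is spanned by the powers `x^{np}`, and its image (so
that the cokernel, i.e. `H¹`, is free on the classes of `x^{np-1} dx`) is spanned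
by the monomials `x^m` with `p ∤ m + 1`. -/
theorem s_cartier {R : Type*} [CommRing R] (s : ℕ → R)
    (h0 : s 0 = 0)
    (hreg : ∀ n : ℕ, 0 < n → s n ∈ nonZeroDivisors R)
    (hdvd : ∀ n k : ℕ, 0 < k → k < n → s (n - k) ∣ s n - s k)
    (p : ℕ) (hp : p.Prime)
    (h1 : IsUnit (Ideal.Quotient.mk (Ideal.span {s p}) (s 1)))
    (D : Polynomial (R ⧸ Ideal.span {s p}) →ₗ[R ⧸ Ideal.span {s p}]
          Polynomial (R ⧸ Ideal.span {s p}))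
    (hD0 : D 1 = 0)
    (hDX : ∀ n : ℕ, D (X ^ (n + 1)) = Ideal.Quotient.mk (Ideal.span {s p}) (s (n + 1)) • X ^ n) :
    LinearMap.ker D
      = Submodule.span (R ⧸ Ideal.span {s p})
          (Set.range fun n : ℕ => (X : Polynomial (R ⧸ Ideal.span {s p})) ^ (n * p)) ∧
    LinearMap.range D
      = Submodule.span (R ⧸ Ideal.span {s p})
          {f : Polynomial (R ⧸ Ideal.span {s p}) | ∃ m : ℕ, ¬ p ∣ (m + 1) ∧ f = X ^ m} := by
  set φ := Ideal.Quotient.mk (Ideal.span {s p}) with hφ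
  -- mod p reduction
  have hmod : ∀ m : ℕ, φ (s m) = φ (s (m % p)) := by
    intro m
    conv_lhs => rw [show m = p * (m / p) + m % p from (Nat.div_add_mod m p).symm]
    exact sc_shift s h0 hdvd p hp.pos (m / p) (m % p)
  -- vanishing for multiples of p
  have hzero : ∀ m : ℕ, p ∣ m → φ (s m) = 0 := by
    intro m hm
    obtain ⟨n, rfl⟩ := hm
    have : s p ∣ s (n * p) := sc_mult s h0 hdvd p hp.pos n
    rw [mul_comm p n]
    rw [hφ, Ideal.Quotient.eq_zero_iff_mem]
    exact Ideal.mem_span_singleton.mpr this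
  -- units for non-multiples of p
  have hunit : ∀ m : ℕ, ¬ p ∣ m → IsUnit (φ (s m)) := by
    intro m hm
    set r := m % p with hr
    have hrne : r ≠ 0 := fun h => hm (Nat.dvd_of_mod_eq_zero h)
    have hr0 : 0 < r := Nat.pos_of_ne_zero hrne
    have hrp : r < p := Nat.mod_lt _ hp.pos
    have hcop : Nat.Coprime r p := by
      have hpr : ¬ p ∣ r := fun hd => absurd (Nat.le_of_dvd hr0 hd) (not_le.mpr hrp)
      exact (Nat.coprime_comm.mp (hp.coprime_iff_not_dvd.mpr hpr))
    obtain ⟨b, -, hb⟩ := Nat.exists_mul_mod_eq_one_of_coprime hcop hp.one_lt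
    have h1' : φ (s (r * b)) = φ (s 1) := by
      rw [hmod (r * b), hb]
    have hdr : φ (s r) ∣ φ (s (r * b)) := by
      have : s r ∣ s (b * r) := sc_mult s h0 hdvd r hr0 b
      rw [mul_comm b r] at this
      exact map_dvd φ this
    rw [h1'] at hdr
    have hu : IsUnit (φ (s r)) := isUnit_of_dvd_unit hdr h1
    rw [hmod m]
    exact hu
  -- coefficient formula for D
  have hDcoeff : ∀ f : Polynomial (R ⧸ Ideal.span {s p}), ∀ n : ℕ,
      (D f).coeff n = φ (s (n + 1)) * f.coeff (n + 1) := by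
    intro f
    induction f using Polynomial.induction_on' with
    | add f g hf hg =>
      intro n
      simp [map_add, hf n, hg n, mul_add]
    | monomial i a =>
      intro n
      have hmon : (monomial i a : Polynomial (R ⧸ Ideal.span {s p})) = a • X ^ i :=
        (smul_X_eq_monomial).symm
      cases i with
      | zero =>
        rw [hmon, pow_zero, map_smul, hD0, smul_zero]
        simp [coeff_monomial, coeff_one]
      | succ i =>
        rw [hmon, map_smul, hDX i]
        simp only [coeff_smul, coeff_X_pow, smul_eq_mul]
        by_cases h : n = i
        · subst h
          simp
          ring
        · have h' : ¬ (n + 1 = i + 1) := by omega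
          simp [h, h']
  constructor
  · -- kernel
    apply le_antisymm
    · intro f hf
      have hf0 : D f = 0 := hf
      have hc : ∀ i : ℕ, 0 < i → ¬ p ∣ i → f.coeff i = 0 := by
        intro i hi hpi
        obtain ⟨n, rfl⟩ : ∃ n, i = n + 1 := ⟨i - 1, by omega⟩
        have h := hDcoeff f n
        rw [hf0] at h
        simp only [coeff_zero] at h
        exact ((hunit (n + 1) hpi).mul_right_eq_zero).mp h.symm
      rw [f.as_sum_support]
      apply Submodule.sum_mem
      intro i _
      by_cases hip : p ∣ i
      · obtain ⟨n, rfl⟩ : ∃ n, i = n * p := ⟨i / p, (Nat.div_mul_cancel hip).symm⟩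
        rw [← smul_X_eq_monomial]
        exact Submodule.smul_mem _ _ (Submodule.subset_span ⟨n, rfl⟩)
      · have hi : 0 < i := by
          rcases Nat.eq_zero_or_pos i with rfl | h
          · exact absurd (dvd_zero p) hip
          · exact h
        rw [hc i hi hip, monomial_zero_right]
        exact Submodule.zero_mem _
    · rw [Submodule.span_le]
      rintro _ ⟨n, rfl⟩
      simp only [SetLike.mem_coe, LinearMap.mem_ker]
      rcases Nat.eq_zero_or_pos (n * p) with h | h
      · rw [h, pow_zero, hD0]
      · obtain ⟨m, hm⟩ : ∃ m, n * p = m + 1 := ⟨n * p - 1, by omega⟩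
        rw [hm, hDX m, ← hm, hzero (n * p) (dvd_mul_left p n), zero_smul]
  · -- range
    apply le_antisymm
    · rintro _ ⟨f, rfl⟩
      rw [(D f).as_sum_support]
      apply Submodule.sum_mem
      intro m _
      by_cases hm : p ∣ (m + 1)
      · have : (D f).coeff m = 0 := by rw [hDcoeff f m, hzero _ hm, zero_mul]
        rw [this, monomial_zero_right]
        exact Submodule.zero_mem _
      · rw [← smul_X_eq_monomial]
        exact Submodule.smul_mem _ _ (Submodule.subset_span ⟨m, hm, rfl⟩)
    · rw [Submodule.span_le]
      rintro _ ⟨m, hm, rfl⟩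
      simp only [SetLike.mem_coe, LinearMap.mem_range]
      obtain ⟨u, hu⟩ := hunit (m + 1) hm
      refine ⟨(↑u⁻¹ : R ⧸ Ideal.span {s p}) • X ^ (m + 1), ?_⟩
      rw [map_smul, hDX m, smul_smul, ← hu, Units.inv_mul, one_smul]
end

section
/- Let F(x,y) ∈ R⟦x,y⟧ be a (one-dimensional, commutative) formal group law over a commutative ring R such that the n-series [n]_F(t) ∈ R⟦t⟧ is not a zero-divisor for any n > 0. Then the function s : ℕ → R⟦t⟧ given by s(n) = [n]_F(t) is a generalized n-series over R⟦t⟧: s(0) = 0, each s(n) (n>0) is a non-zero-divisor, and s(n-k) divides s(n) - s(k) in R⟦t⟧ for all n > k > 0. The same holds for s_F(n) = [n]_F(t)/t. -/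
/-- Substitution of two multivariate power series (with vanishing constant terms) into
a two-variable power series `F ∈ R⟦x,y⟧`: the coefficient of `F(g₁,g₂)` at a monomial
`d` only involves `F_{ij} · coeff d (g₁^i g₂^j)` for `i + j ≤ |d|`. -/
noncomputable def subst2 {R : Type*} [CommRing R] {σ : Type*}
    (F : MvPowerSeries (Fin 2) R) (g₁ g₂ : MvPowerSeries σ R) : MvPowerSeries σ R :=
  fun d : σ →₀ ℕ =>
    ∑ i ∈ Finset.range (d.sum (fun _ n => n) + 1),
      ∑ j ∈ Finset.range (d.sum (fun _ n => n) + 1),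
        MvPowerSeries.coeff (Finsupp.single 0 i + Finsupp.single 1 j) F *
          MvPowerSeries.coeff d (g₁ ^ i * g₂ ^ j)

lemma coeff_subst2 {R : Type*} [CommRing R] (F : MvPowerSeries (Fin 2) R)
    (g₁ g₂ : PowerSeries R) (n : ℕ) :
    PowerSeries.coeff n (subst2 F g₁ g₂) =
      ∑ i ∈ Finset.range (n + 1), ∑ j ∈ Finset.range (n + 1),
        MvPowerSeries.coeff (Finsupp.single 0 i + Finsupp.single 1 j) F *
          PowerSeries.coeff n (g₁ ^ i * g₂ ^ j) := by
  have hs : (Finsupp.single () n).sum (fun _ k => k) = n := by simp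
  show (subst2 F g₁ g₂) (Finsupp.single () n) = _
  simp only [subst2, hs]
  rfl

open Finset in
lemma key_dvd {R : Type*} [CommRing R] (F : MvPowerSeries (Fin 2) R) (a b : PowerSeries R)
    (ha : PowerSeries.constantCoeff a = 0) (hb : PowerSeries.constantCoeff b = 0) :
    (a - b) ∣ subst2 F PowerSeries.X a - subst2 F PowerSeries.X b := by
  classical
  set X : PowerSeries R := PowerSeries.X with hXdef
  set c : ℕ → ℕ → R := fun i j =>
    MvPowerSeries.coeff (Finsupp.single 0 i + Finsupp.single 1 j) F with hcdef
  set S : ℕ → PowerSeries R := fun j => ∑ l ∈ Finset.range j, a ^ l * b ^ (j - 1 - l) with hSdef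
  have hXa : X ∣ a := PowerSeries.X_dvd_iff.mpr ha
  have hXb : X ∣ b := PowerSeries.X_dvd_iff.mpr hb
  have hgeom : ∀ j : ℕ, (a - b) * S j = a ^ j - b ^ j := by
    intro j; rw [mul_comm]; exact geom_sum₂_mul a b j
  have hS0 : S 0 = 0 := by simp [hSdef]
  have hSdvd : ∀ j : ℕ, X ^ (j - 1) ∣ S j := by
    intro j
    refine Finset.dvd_sum fun l hl => ?_
    have hl' : l ≤ j - 1 := by have := Finset.mem_range.mp hl; omega
    have h := mul_dvd_mul (pow_dvd_pow_of_dvd hXa l) (pow_dvd_pow_of_dvd hXb (j - 1 - l))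
    rwa [← pow_add, Nat.add_sub_cancel' hl'] at h
  have hzero : ∀ i j m : ℕ, 1 ≤ j → m + 1 < i + j →
      PowerSeries.coeff m (X ^ i * S j) = 0 := by
    intro i j m hj hm
    have h1 : X ^ (i + (j - 1)) ∣ X ^ i * S j := by
      rw [pow_add]; exact mul_dvd_mul_left _ (hSdvd j)
    exact PowerSeries.X_pow_dvd_iff.mp h1 m (by omega)
  have hXab : X ∣ a - b := PowerSeries.X_dvd_iff.mpr (by rw [map_sub, ha, hb, sub_zero])
  have hzero2 : ∀ i j m : ℕ, 1 ≤ j → m < i + j →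
      PowerSeries.coeff m (X ^ i * (a ^ j - b ^ j)) = 0 := by
    intro i j m hj hm
    have h2 : X ^ 1 * X ^ (j - 1) ∣ (a - b) * S j :=
      mul_dvd_mul (by simpa using hXab) (hSdvd j)
    rw [← pow_add] at h2
    have he : 1 + (j - 1) = j := by omega
    rw [he] at h2
    have h1 : X ^ (i + j) ∣ X ^ i * (a ^ j - b ^ j) := by
      rw [← hgeom, pow_add]; exact mul_dvd_mul_left _ h2
    exact PowerSeries.X_pow_dvd_iff.mp h1 m hm
  set q : PowerSeries R := PowerSeries.mk (fun e =>
    ∑ i ∈ Finset.range (e + 2), ∑ j ∈ Finset.range (e + 2),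
      c i j * PowerSeries.coeff e (X ^ i * S j)) with hqdef
  refine ⟨q, ?_⟩
  have hq : ∀ m N : ℕ, m + 2 ≤ N → PowerSeries.coeff m q =
      ∑ i ∈ Finset.range N, ∑ j ∈ Finset.range N,
        c i j * PowerSeries.coeff m (X ^ i * S j) := by
    intro m N hN
    rw [hqdef, PowerSeries.coeff_mk]
    have step1 : ∀ i : ℕ,
        ∑ j ∈ Finset.range (m + 2), c i j * PowerSeries.coeff m (X ^ i * S j)
        = ∑ j ∈ Finset.range N, c i j * PowerSeries.coeff m (X ^ i * S j) := by
      intro i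
      apply Finset.sum_subset (Finset.range_subset_range.mpr hN)
      intro j _ hj
      have hj2 : m + 2 ≤ j := by simp only [Finset.mem_range, not_lt] at hj; omega
      rw [hzero i j m (by omega) (by omega), mul_zero]
    calc ∑ i ∈ Finset.range (m + 2), ∑ j ∈ Finset.range (m + 2),
            c i j * PowerSeries.coeff m (X ^ i * S j)
        = ∑ i ∈ Finset.range (m + 2), ∑ j ∈ Finset.range N,
            c i j * PowerSeries.coeff m (X ^ i * S j) :=
          Finset.sum_congr rfl fun i _ => step1 i
      _ = ∑ i ∈ Finset.range N, ∑ j ∈ Finset.range N,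
            c i j * PowerSeries.coeff m (X ^ i * S j) := by
          apply Finset.sum_subset (Finset.range_subset_range.mpr hN)
          intro i _ hi
          have hi2 : m + 2 ≤ i := by simp only [Finset.mem_range, not_lt] at hi; omega
          apply Finset.sum_eq_zero
          intro j hj
          rcases Nat.eq_zero_or_pos j with rfl | hjpos
          · simp [hS0]
          · rw [hzero i j m hjpos (by omega), mul_zero]
  ext n
  have hRHS : PowerSeries.coeff n ((a - b) * q)
      = ∑ i ∈ Finset.range (n + 2), ∑ j ∈ Finset.range (n + 2),
          c i j * PowerSeries.coeff n (X ^ i * (a ^ j - b ^ j)) := by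
    rw [PowerSeries.coeff_mul]
    have hstep : ∀ p ∈ Finset.HasAntidiagonal.antidiagonal n,
        PowerSeries.coeff p.1 (a - b) * PowerSeries.coeff p.2 q
        = ∑ i ∈ Finset.range (n + 2), ∑ j ∈ Finset.range (n + 2),
            c i j * (PowerSeries.coeff p.1 (a - b) *
              PowerSeries.coeff p.2 (X ^ i * S j)) := by
      intro p hp
      have hp2 : p.2 ≤ n := by
        have := Finset.HasAntidiagonal.mem_antidiagonal.mp hp; omega
      rw [hq p.2 (n + 2) (by omega), Finset.mul_sum]
      refine Finset.sum_congr rfl fun i _ => ?_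
      rw [Finset.mul_sum]
      exact Finset.sum_congr rfl fun j _ => by ring
    rw [Finset.sum_congr rfl hstep, Finset.sum_comm]
    refine Finset.sum_congr rfl fun i _ => ?_
    rw [Finset.sum_comm]
    refine Finset.sum_congr rfl fun j _ => ?_
    rw [← Finset.mul_sum, ← PowerSeries.coeff_mul]
    congr 2
    rw [← hgeom j]; ring
  have hLHS : PowerSeries.coeff n (subst2 F X a - subst2 F X b)
      = ∑ i ∈ Finset.range (n + 1), ∑ j ∈ Finset.range (n + 1),
          c i j * PowerSeries.coeff n (X ^ i * (a ^ j - b ^ j)) := by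
    rw [map_sub, coeff_subst2, coeff_subst2, ← Finset.sum_sub_distrib]
    refine Finset.sum_congr rfl fun i _ => ?_
    rw [← Finset.sum_sub_distrib]
    refine Finset.sum_congr rfl fun j _ => ?_
    rw [mul_sub (X ^ i), map_sub, mul_sub]
  have hext2 : ∑ i ∈ Finset.range (n + 1), ∑ j ∈ Finset.range (n + 1),
          c i j * PowerSeries.coeff n (X ^ i * (a ^ j - b ^ j))
      = ∑ i ∈ Finset.range (n + 2), ∑ j ∈ Finset.range (n + 2),
          c i j * PowerSeries.coeff n (X ^ i * (a ^ j - b ^ j)) := by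
    have step1 : ∀ i : ℕ,
        ∑ j ∈ Finset.range (n + 1), c i j * PowerSeries.coeff n (X ^ i * (a ^ j - b ^ j))
        = ∑ j ∈ Finset.range (n + 2), c i j * PowerSeries.coeff n (X ^ i * (a ^ j - b ^ j)) := by
      intro i
      apply Finset.sum_subset (Finset.range_subset_range.mpr (by omega))
      intro j _ hj
      have hj2 : n + 1 ≤ j := by simp only [Finset.mem_range, not_lt] at hj; omega
      rw [hzero2 i j n (by omega) (by omega), mul_zero]
    calc _ = ∑ i ∈ Finset.range (n + 1), ∑ j ∈ Finset.range (n + 2),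
            c i j * PowerSeries.coeff n (X ^ i * (a ^ j - b ^ j)) :=
          Finset.sum_congr rfl fun i _ => step1 i
      _ = _ := by
          apply Finset.sum_subset (Finset.range_subset_range.mpr (by omega))
          intro i _ hi
          have hi2 : n + 1 ≤ i := by simp only [Finset.mem_range, not_lt] at hi; omega
          apply Finset.sum_eq_zero
          intro j hj
          rcases Nat.eq_zero_or_pos j with rfl | hjpos
          · simp
          · rw [hzero2 i j n hjpos (by omega), mul_zero]
  rw [hLHS, hRHS]
  exact hext2
/-- For a formal group law `F` over `R` whose n-series `[n]_F` are non-zero-divisors,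
the functions `n ↦ [n]_F(t)` and `n ↦ ⟨n⟩_F(t) = [n]_F(t)/t` are generalized
n-series over `R⟦t⟧`. -/
theorem fgl_nseries_GNS {R : Type*} [CommRing R]
    (F : MvPowerSeries (Fin 2) R)
    -- F(x,y) ≡ x + y mod (x,y)²
    (hlin : F - MvPowerSeries.X 0 - MvPowerSeries.X 1 ∈
      (Ideal.span {(MvPowerSeries.X 0 : MvPowerSeries (Fin 2) R),
        MvPowerSeries.X 1}) ^ 2)
    -- associativity F(F(x,y),z) = F(x,F(y,z))
    (hassoc :
      subst2 F (subst2 F (MvPowerSeries.X 0) (MvPowerSeries.X 1))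
          ((MvPowerSeries.X 2 : MvPowerSeries (Fin 3) R))
        = subst2 F (MvPowerSeries.X 0)
            (subst2 F (MvPowerSeries.X 1) (MvPowerSeries.X 2)))
    -- the n-series: [0]_F = 0, [n+1]_F = F(t, [n]_F)
    (ns : ℕ → PowerSeries R)
    (hns0 : ns 0 = 0)
    (hnsrec : ∀ n : ℕ, ns (n + 1) = subst2 F PowerSeries.X (ns n))
    -- each [n]_F, n > 0, is a non-zero-divisor
    (hreg : ∀ n : ℕ, 0 < n → ns n ∈ nonZeroDivisors (PowerSeries R)) :
    (∀ n k : ℕ, 0 < k → k < n → ns (n - k) ∣ ns n - ns k) ∧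
    (∀ d : ℕ → PowerSeries R, (∀ n : ℕ, ns n = PowerSeries.X * d n) →
      (∀ n : ℕ, 0 < n → d n ∈ nonZeroDivisors (PowerSeries R)) →
      d 0 = 0 ∧ ∀ n k : ℕ, 0 < k → k < n → d (n - k) ∣ d n - d k) := by
  -- constant coefficient of F is zero
  have hF00 : MvPowerSeries.constantCoeff F = 0 := by
    have hI : (Ideal.span {(MvPowerSeries.X 0 : MvPowerSeries (Fin 2) R),
        MvPowerSeries.X 1}) ≤ RingHom.ker (MvPowerSeries.constantCoeff) := by
      rw [Ideal.span_le]
      rintro x hx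
      simp only [Set.mem_insert_iff, Set.mem_singleton_iff] at hx
      rcases hx with rfl | rfl <;>
        simp [RingHom.mem_ker, MvPowerSeries.constantCoeff_X]
    have h2 : F - MvPowerSeries.X 0 - MvPowerSeries.X 1 ∈
        RingHom.ker (MvPowerSeries.constantCoeff) :=
      hI (Ideal.pow_le_self two_ne_zero hlin)
    rw [RingHom.mem_ker, map_sub, map_sub, MvPowerSeries.constantCoeff_X,
      MvPowerSeries.constantCoeff_X, sub_zero, sub_zero] at h2
    exact h2
  have hc : ∀ n : ℕ, PowerSeries.constantCoeff (ns n) = 0 := by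
    intro n
    induction n with
    | zero => simp [hns0]
    | succ n _ =>
      rw [hnsrec, ← PowerSeries.coeff_zero_eq_constantCoeff_apply, coeff_subst2]
      simpa using hF00
  have main : ∀ k n : ℕ, k ≤ n → ns (n - k) ∣ ns n - ns k := by
    intro k
    induction k with
    | zero => intro n _; simp [hns0]
    | succ k ih =>
      intro n hkn
      obtain ⟨m, rfl⟩ : ∃ m, n = m + 1 := ⟨n - 1, by omega⟩
      have hkm : k ≤ m := by omega
      have he : m + 1 - (k + 1) = m - k := by omega
      rw [he, hnsrec, hnsrec]
      exact (ih m hkm).trans (key_dvd F (ns m) (ns k) (hc m) (hc k))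
  have hXc : ∀ f g : PowerSeries R, PowerSeries.X * f = PowerSeries.X * g → f = g := by
    intro f g h
    ext m
    have h2 := congrArg (PowerSeries.coeff (m + 1)) h
    rwa [PowerSeries.coeff_succ_X_mul, PowerSeries.coeff_succ_X_mul] at h2
  refine ⟨fun n k _ hkn => main k n hkn.le, fun d hd _ => ⟨?_, ?_⟩⟩
  · apply hXc
    rw [← hd 0, hns0, mul_zero]
  · intro n k _ hkn
    obtain ⟨e, he⟩ := main k n hkn.le
    refine ⟨e, hXc _ _ ?_⟩
    rw [mul_sub, ← hd, ← hd, ← mul_assoc, ← hd, ← he]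
end
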